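/- arXiv:2403.12709 — 13 statements merged into one kernel-verified Lean document; each statement's English description precedes it below -/
import Mathlib

section
/- Let G be a finite group acting on R = K[x_1,...,x_n] by linear transformations of the variables, with |G| invertible in K. Then any product of |G| polynomials from R_+ (the polynomials with zero constant term) lies in the Hilbert ideal H = R·R^G_+. In particular, every monomial of degree |G| lies in H. -/
open MvPolynomial

private lemma monomial_eq_prod_toMultiset {K : Type*} [Field K] {n : ℕ} (d : Fin n →₀ ℕ) :
    (d.toMultiset.map X).prod = monomial d (1 : K) := by
  induction d using Finsupp.induction with
  | zero => simp
  | single_add a b f ha hb ih =>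
    rw [Finsupp.toMultiset_add, Multiset.map_add, Multiset.prod_add, ih,
      Finsupp.toMultiset_single, Multiset.map_nsmul, Multiset.map_singleton,
      Multiset.nsmul_singleton, Multiset.prod_replicate, X_pow_eq_monomial,
      monomial_mul, one_mul]

/-- For a finite group `G` acting on `R = K[x₁,…,xₙ]` by linear
transformations of the variables, with `|G|` invertible in `K`, any product of `|G|`
polynomials with zero constant term lies in the Hilbert ideal `H = R·R^G₊`;
in particular, every monomial of degree `|G|` lies in `H`. -/
theorem stmt1 {K : Type*} [Field K] {n : ℕ} {G : Type*} [Group G] [Fintype G]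
    (ρ : G →* (MvPolynomial (Fin n) K ≃ₐ[K] MvPolynomial (Fin n) K))
    (hlin : ∀ (σ : G) (i : Fin n), (ρ σ (X i)).IsHomogeneous 1)
    (hcard : (Fintype.card G : K) ≠ 0) :
    (∀ p : G → MvPolynomial (Fin n) K, (∀ σ, constantCoeff (p σ) = 0) →
      (∏ σ : G, p σ) ∈ Ideal.span {g : MvPolynomial (Fin n) K |
        (∀ σ, ρ σ g = g) ∧ constantCoeff g = 0}) ∧
    (∀ d : Fin n →₀ ℕ, (d.sum fun _ k => k) = Fintype.card G →
      (monomial d (1 : K)) ∈ Ideal.span {g : MvPolynomial (Fin n) K |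
        (∀ σ, ρ σ g = g) ∧ constantCoeff g = 0}) := by
  classical
  set S : Set (MvPolynomial (Fin n) K) :=
    {g | (∀ σ, ρ σ g = g) ∧ constantCoeff g = 0} with hSdef
  set H : Ideal (MvPolynomial (Fin n) K) := Ideal.span S with hHdef
  -- constant coefficient is preserved by the action
  have hcc : ∀ (σ : G) (f : MvPolynomial (Fin n) K),
      constantCoeff (ρ σ f) = constantCoeff f := by
    intro σ f
    have : (constantCoeff (R := K) (σ := Fin n)).comp
        (ρ σ : MvPolynomial (Fin n) K →+* MvPolynomial (Fin n) K) = constantCoeff := by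
      apply MvPolynomial.ringHom_ext
      · intro a
        have : (ρ σ) (C a) = C a := by
          simpa [Algebra.algebraMap_eq_smul_one, Algebra.smul_def] using (ρ σ).commutes a
        simp [this]
      · intro i
        simp only [RingHom.comp_apply, RingHom.coe_coe, constantCoeff_X]
        exact (hlin σ i).coeff_eq_zero (by simp [Finsupp.degree])
    exact RingHom.congr_fun this f
  have main : ∀ p : G → MvPolynomial (Fin n) K, (∀ σ, constantCoeff (p σ) = 0) →
      (∏ σ : G, p σ) ∈ H := by
    intro p hp
    -- the key vanishing sum
    have hzero : ∑ σ : G, ∏ g : G, (p g + -(ρ (σ * g) (p g))) = 0 := by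
      apply Finset.sum_eq_zero
      intro σ _
      apply Finset.prod_eq_zero (Finset.mem_univ σ⁻¹)
      rw [mul_inv_cancel, map_one]
      simp
    have hexp : ∀ σ : G, ∏ g : G, (p g + -(ρ (σ * g) (p g))) =
        ∑ t : Finset G, (∏ g ∈ t, p g) * ∏ g ∈ tᶜ, -(ρ (σ * g) (p g)) :=
      fun σ => Fintype.prod_add _ _
    rw [Finset.sum_congr rfl (fun σ _ => hexp σ), Finset.sum_comm] at hzero
    set F : Finset G → MvPolynomial (Fin n) K :=
      fun t => ∑ σ : G, (∏ g ∈ t, p g) * ∏ g ∈ tᶜ, -(ρ (σ * g) (p g)) with hF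
    have hFuniv : F Finset.univ = (Fintype.card G : MvPolynomial (Fin n) K) * ∏ g : G, p g := by
      simp [hF, Finset.compl_univ, Finset.mul_sum, mul_comm]
    have hFmem : ∀ t : Finset G, t ≠ Finset.univ → F t ∈ H := by
      intro t ht
      obtain ⟨g₀, hg₀⟩ : tᶜ.Nonempty := (Finset.compl_ne_univ_iff_nonempty tᶜ).mp (by rwa [compl_compl])
      set q : MvPolynomial (Fin n) K := ∏ g ∈ tᶜ, ρ g (p g) with hq
      have hfac : ∀ σ : G, (∏ g ∈ tᶜ, -(ρ (σ * g) (p g))) = (-1) ^ tᶜ.card * ρ σ q := by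
        intro σ
        have h1 : ∀ g ∈ tᶜ, -(ρ (σ * g) (p g)) = (-1) * (ρ σ (ρ g (p g))) := by
          intro g _
          rw [map_mul ρ, AlgEquiv.mul_apply, neg_one_mul]
        rw [Finset.prod_congr rfl h1, Finset.prod_mul_distrib, Finset.prod_const, hq,
          map_prod]
      have hTr : (∑ σ : G, ρ σ q) ∈ S := by
        constructor
        · intro τ
          rw [map_sum]
          have h2 : ∀ σ : G, ρ τ (ρ σ q) = ρ (τ * σ) q := by
            intro σ
            rw [map_mul ρ, AlgEquiv.mul_apply]
          rw [Finset.sum_congr rfl (fun σ _ => h2 σ)]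
          exact Fintype.sum_bijective (fun σ => τ * σ) (Group.mulLeft_bijective τ)
            _ _ (fun σ => rfl)
        · rw [map_sum]
          have h3 : constantCoeff q = 0 := by
            rw [hq, map_prod]
            exact Finset.prod_eq_zero hg₀ (by rw [hcc]; exact hp g₀)
          simp [hcc, h3]
      have hFt : F t = (∏ g ∈ t, p g) * ((-1) ^ tᶜ.card * ∑ σ : G, ρ σ q) := by
        rw [hF]
        simp only [hfac]
        rw [← Finset.mul_sum, ← Finset.mul_sum]
      rw [hFt]
      exact Ideal.mul_mem_left _ _ (Ideal.mul_mem_left _ _ (Ideal.subset_span hTr))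
    have hsplit : F Finset.univ + ∑ t ∈ Finset.univ.erase Finset.univ, F t = 0 := by
      rw [Finset.add_sum_erase _ F (Finset.mem_univ _)]
      exact hzero
    have hmemcard : (Fintype.card G : MvPolynomial (Fin n) K) * ∏ g : G, p g ∈ H := by
      rw [← hFuniv, eq_neg_of_add_eq_zero_left hsplit]
      exact neg_mem (Ideal.sum_mem _ fun t htmem =>
        hFmem t (Finset.ne_of_mem_erase htmem))
    have hfinal : (∏ g : G, p g) = C ((Fintype.card G : K)⁻¹) *
        ((Fintype.card G : MvPolynomial (Fin n) K) * ∏ g : G, p g) := by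
      rw [← mul_assoc]
      have hcast : (Fintype.card G : MvPolynomial (Fin n) K) = C (Fintype.card G : K) := by
        simp
      rw [hcast, ← C_mul, inv_mul_cancel₀ hcard, C_1, one_mul]
    rw [hfinal]
    exact Ideal.mul_mem_left _ _ hmemcard
  refine ⟨main, ?_⟩
  intro d hd
  set l : List (Fin n) := d.toMultiset.toList with hl
  have hlen : l.length = Fintype.card G := by
    rw [hl, Multiset.length_toList, Finsupp.card_toMultiset, ← hd]
    rfl
  set e : G ≃ Fin (Fintype.card G) := Fintype.equivFin G with he
  set p : G → MvPolynomial (Fin n) K :=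
    fun σ => X (l.get ((e σ).cast hlen.symm)) with hpdef
  have hprod : (∏ σ : G, p σ) = monomial d (1 : K) := by
    have h1 : (∏ σ : G, p σ) = ∏ j : Fin (Fintype.card G), X (l.get (j.cast hlen.symm)) :=
      Fintype.prod_equiv e _ _ (fun σ => rfl)
    have h2 : (∏ j : Fin (Fintype.card G), X (l.get (j.cast hlen.symm)) : MvPolynomial (Fin n) K)
        = ∏ i : Fin l.length, X (l.get i) :=
      Fintype.prod_equiv (finCongr hlen.symm) _ _ (fun j => rfl)
    have h3 : (∏ i : Fin l.length, X (l.get i) : MvPolynomial (Fin n) K) = (l.map X).prod := by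
      conv_rhs => rw [← List.ofFn_get l]
      rw [List.map_ofFn, List.prod_ofFn]
      rfl
    have h4 : ((l.map X).prod : MvPolynomial (Fin n) K) = monomial d (1 : K) := by
      rw [← monomial_eq_prod_toMultiset d]
      conv_rhs => rw [← Multiset.coe_toList (Finsupp.toMultiset d)]
      rw [Multiset.map_coe, Multiset.prod_coe, hl]
    rw [h1, h2, h3, h4]
  rw [← hprod]
  exact main p (fun σ => by simp [hpdef])
end

section
/- (Noether's degree bound) Let G be a finite group acting on R = K[x_1,...,x_n] by linear transformations of the variables, with |G| invertible in K. Then the invariant ring R^G is generated as a K-algebra by the homogeneous invariants of degree at most |G|. -/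
open MvPolynomial Finset

namespace NoetherAux

variable {K : Type*} [Field K] {n : ℕ} {G : Type*} [Group G] [Fintype G]

/-- The transfer (trace) operator. -/
noncomputable def Tr (ρ : G →* (MvPolynomial (Fin n) K ≃ₐ[K] MvPolynomial (Fin n) K))
    (x : MvPolynomial (Fin n) K) : MvPolynomial (Fin n) K :=
  ∑ σ : G, ρ σ x

variable (ρ : G →* (MvPolynomial (Fin n) K ≃ₐ[K] MvPolynomial (Fin n) K))

lemma rho_rho (σ τ : G) (x : MvPolynomial (Fin n) K) : ρ σ (ρ τ x) = ρ (σ * τ) x := by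
  rw [map_mul]; rfl

lemma Tr_invariant (τ : G) (x : MvPolynomial (Fin n) K) : ρ τ (Tr ρ x) = Tr ρ x := by
  unfold Tr
  rw [map_sum, ← Equiv.sum_comp (Equiv.mulLeft τ) (fun σ => ρ σ x)]
  exact Finset.sum_congr rfl fun σ _ => rho_rho ρ τ σ x

lemma Tr_mul_inv (x g : MvPolynomial (Fin n) K) (hg : ∀ σ, ρ σ g = g) :
    Tr ρ (x * g) = Tr ρ x * g := by
  unfold Tr
  rw [Finset.sum_mul]
  exact Finset.sum_congr rfl fun σ _ => by rw [map_mul, hg]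

lemma Tr_sum {ι : Type*} (s : Finset ι) (f : ι → MvPolynomial (Fin n) K) :
    Tr ρ (∑ v ∈ s, f v) = ∑ v ∈ s, Tr ρ (f v) := by
  unfold Tr
  rw [Finset.sum_comm]
  exact Finset.sum_congr rfl fun σ _ => map_sum _ _ _

lemma Tr_C_mul (c : K) (x : MvPolynomial (Fin n) K) : Tr ρ (C c * x) = C c * Tr ρ x := by
  unfold Tr
  rw [Finset.mul_sum]
  refine Finset.sum_congr rfl fun σ _ => ?_
  rw [map_mul]
  congr 1
  simpa [MvPolynomial.algebraMap_eq] using (ρ σ).commutes c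

lemma Tr_neg (x : MvPolynomial (Fin n) K) : Tr ρ (-x) = - Tr ρ x := by
  unfold Tr
  simp

lemma Tr_homo (e : ℕ) (x : MvPolynomial (Fin n) K)
    (h : ∀ τ : G, (ρ τ x).IsHomogeneous e) : (Tr ρ x).IsHomogeneous e := by
  rw [← mem_homogeneousSubmodule]
  exact Submodule.sum_mem _ fun τ _ => (mem_homogeneousSubmodule _ _).2 (h τ)

lemma Tr_self_invariant (x : MvPolynomial (Fin n) K) (hx : ∀ σ, ρ σ x = x) :
    Tr ρ x = (Fintype.card G) • x := by
  unfold Tr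
  rw [Finset.sum_congr rfl fun σ _ => hx σ, Finset.sum_const, Finset.card_univ]

lemma hom_monomial (hlin : ∀ (σ : G) (i : Fin n), (ρ σ (X i)).IsHomogeneous 1)
    (τ : G) (α : Fin n →₀ ℕ) :
    (ρ τ (monomial α (1 : K))).IsHomogeneous (α.sum fun _ e => e) := by
  have h1 : (monomial α (1 : K)) = α.prod fun i e => X i ^ e := by
    rw [monomial_eq, C_1, one_mul]
  rw [h1, Finsupp.prod, map_prod]
  have := MvPolynomial.IsHomogeneous.prod α.support (fun i => ρ τ (X i ^ α i))
      (fun i => α i) (fun i _ => by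
        show ((ρ τ) (X i ^ α i)).IsHomogeneous (α i)
        rw [map_pow]
        simpa using (hlin τ i).pow (α i))
  simpa [Finsupp.sum] using this

/-- Benson's identity. -/
lemma benson (e : Fin (Fintype.card G) ≃ G) (b : MvPolynomial (Fin n) K)
    (a : Fin (Fintype.card G) → MvPolynomial (Fin n) K) :
    ∑ S ∈ (univ : Finset (Fin (Fintype.card G))).powerset,
      (∏ i ∈ S, (-(ρ (e i) (a i)))) * Tr ρ (b * ∏ i ∈ univ \ S, a i) = 0 := by
  classical
  have expand : ∀ S : Finset (Fin (Fintype.card G)),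
      Tr ρ (b * ∏ i ∈ univ \ S, a i) = ∑ τ : G, ρ τ b * ∏ i ∈ univ \ S, ρ τ (a i) := by
    intro S
    unfold Tr
    exact Finset.sum_congr rfl fun τ _ => by rw [map_mul, map_prod]
  calc
    ∑ S ∈ (univ : Finset (Fin (Fintype.card G))).powerset,
      (∏ i ∈ S, (-(ρ (e i) (a i)))) * Tr ρ (b * ∏ i ∈ univ \ S, a i)
      = ∑ τ : G, ρ τ b * ∑ S ∈ (univ : Finset (Fin (Fintype.card G))).powerset,
          (∏ i ∈ S, (-(ρ (e i) (a i)))) * ∏ i ∈ univ \ S, ρ τ (a i) := by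
        simp only [expand, Finset.mul_sum]
        rw [Finset.sum_comm]
        exact Finset.sum_congr rfl fun τ _ => Finset.sum_congr rfl fun S _ => by ring
    _ = ∑ τ : G, ρ τ b * ∏ i, ((-(ρ (e i) (a i))) + ρ τ (a i)) := by
        refine Finset.sum_congr rfl fun τ _ => ?_
        rw [Finset.prod_add]
    _ = 0 := by
        refine Finset.sum_eq_zero fun τ _ => ?_
        have h0 : ((-(ρ (e (e.symm τ)) (a (e.symm τ)))) + ρ τ (a (e.symm τ))) = 0 := by
          rw [e.apply_symm_apply]; ring
        rw [Finset.prod_eq_zero (Finset.mem_univ (e.symm τ)) h0, mul_zero]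

/-- Splitting a multi-index into `k` unit vectors plus a remainder. -/
lemma split (k : ℕ) : ∀ (α : Fin n →₀ ℕ), k ≤ (α.sum fun _ e => e) →
    ∃ (γ : Fin n →₀ ℕ) (j : Fin k → Fin n),
      α = γ + ∑ i : Fin k, Finsupp.single (j i) 1 := by
  induction k with
  | zero => intro α _; exact ⟨α, Fin.elim0, by simp⟩
  | succ k IH =>
    intro α hk
    have hα : α ≠ 0 := by
      rintro rfl
      simp [Finsupp.sum] at hk
    obtain ⟨i₀, hi₀⟩ := Finsupp.ne_iff.1 hα
    simp only [Finsupp.coe_zero, Pi.zero_apply] at hi₀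
    have hαi : 1 ≤ α i₀ := Nat.one_le_iff_ne_zero.2 hi₀
    set α' := α - Finsupp.single i₀ 1 with hα'
    have hrec : α = α' + Finsupp.single i₀ 1 := by
      ext b
      simp only [hα', Finsupp.add_apply, Finsupp.coe_tsub, Pi.sub_apply,
        Finsupp.single_apply]
      split_ifs with h
      · subst h; omega
      · omega
    have hsum : (α.sum fun _ e => e) = (α'.sum fun _ e => e) + 1 := by
      rw [hrec, Finsupp.sum_add_index' (fun _ => rfl) (fun _ _ _ => rfl),
        Finsupp.sum_single_index rfl]
    have hk' : k ≤ (α'.sum fun _ e => e) := by omega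
    obtain ⟨γ, j, hj⟩ := IH α' hk'
    refine ⟨γ, Fin.cons i₀ j, ?_⟩
    rw [Fin.sum_univ_succ]
    simp only [Fin.cons_zero, Fin.cons_succ]
    rw [hrec, hj]
    abel

lemma prodX (m : ℕ) (j : Fin m → Fin n) (T : Finset (Fin m)) :
    (∏ i ∈ T, (X (j i) : MvPolynomial (Fin n) K)) =
      monomial (∑ i ∈ T, Finsupp.single (j i) 1) 1 := by
  classical
  induction T using Finset.induction with
  | empty => simp
  | insert _ _ hx ih =>
    rw [Finset.prod_insert hx, Finset.sum_insert hx, ih, X, monomial_mul, one_mul]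

lemma deg_sum_single (m : ℕ) (j : Fin m → Fin n) (T : Finset (Fin m)) :
    ((∑ i ∈ T, Finsupp.single (j i) 1 : Fin n →₀ ℕ).sum fun _ e => e) = T.card := by
  classical
  induction T using Finset.induction with
  | empty => simp
  | insert _ _ hx ih =>
    rw [Finset.sum_insert hx, Finsupp.sum_add_index' (fun _ => rfl) (fun _ _ _ => rfl), ih,
      Finsupp.sum_single_index rfl, Finset.card_insert_of_notMem hx]
    omega

end NoetherAux

open NoetherAux

/-- **Noether's degree bound.** For a finite group `G` acting on
`R = K[x₁,…,xₙ]` by linear transformations of the variables, with `|G|` invertible in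
`K`, the invariant ring `R^G` is generated as a `K`-algebra by the homogeneous
invariants of degree at most `|G|`. -/
theorem stmt2 {K : Type*} [Field K] {n : ℕ} {G : Type*} [Group G] [Fintype G]
    (ρ : G →* (MvPolynomial (Fin n) K ≃ₐ[K] MvPolynomial (Fin n) K))
    (hlin : ∀ (σ : G) (i : Fin n), (ρ σ (X i)).IsHomogeneous 1)
    (hcard : (Fintype.card G : K) ≠ 0) :
    ∀ x : MvPolynomial (Fin n) K,
      (∀ σ, ρ σ x = x) ↔
      x ∈ Algebra.adjoin K {g : MvPolynomial (Fin n) K |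
        (∀ σ, ρ σ g = g) ∧ ∃ d ≤ Fintype.card G, g.IsHomogeneous d} := by
  classical
  set m := Fintype.card G with hm
  set A := Algebra.adjoin K {g : MvPolynomial (Fin n) K |
      (∀ σ, ρ σ g = g) ∧ ∃ d ≤ Fintype.card G, g.IsHomogeneous d} with hA
  have smul_cancel : ∀ y : MvPolynomial (Fin n) K, (m • y ∈ A) → y ∈ A := by
    intro y hy
    have h1 : ((m : K)⁻¹ • (m • y)) = y := by
      rw [← Nat.cast_smul_eq_nsmul K m y, smul_smul, inv_mul_cancel₀ hcard, one_smul]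
    rw [← h1]
    exact A.smul_mem hy _
  have key : ∀ d : ℕ, ∀ α : Fin n →₀ ℕ, (α.sum fun _ e => e) = d →
      Tr ρ (monomial α (1 : K)) ∈ A := by
    intro d
    induction d using Nat.strong_induction_on with
    | _ d IH =>
      intro α hα
      by_cases hd : d ≤ m
      · -- low degree: a generator
        apply Algebra.subset_adjoin
        refine ⟨fun τ => Tr_invariant ρ τ _, d, hd, ?_⟩
        exact Tr_homo ρ d _ (fun τ => by rw [← hα]; exact hom_monomial ρ hlin τ α)
      · -- high degree: use Benson's identity
        push_neg at hd
        obtain ⟨γ, j, hsplit⟩ := split m α (by omega)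
        set e : Fin m ≃ G := (Fintype.equivFin G).symm with he
        set a : Fin m → MvPolynomial (Fin n) K := fun i => X (j i) with ha
        have hb := benson ρ e (monomial γ (1 : K)) a
        have hmem0 : (∅ : Finset (Fin m)) ∈ (univ : Finset (Fin m)).powerset :=
          Finset.mem_powerset.2 (Finset.empty_subset _)
        rw [← Finset.add_sum_erase _ _ hmem0] at hb
        have hν : monomial γ (1 : K) * ∏ i ∈ univ \ (∅ : Finset (Fin m)), a i =
            monomial α (1 : K) := by
          rw [Finset.sdiff_empty, ha]
          simp only
          rw [prodX, monomial_mul, one_mul, ← hsplit]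
        rw [Finset.prod_empty, one_mul, hν] at hb
        have hTrν : Tr ρ (monomial α (1 : K)) =
            - ∑ S ∈ ((univ : Finset (Fin m)).powerset.erase ∅),
              (∏ i ∈ S, (-(ρ (e i) (a i)))) *
                Tr ρ (monomial γ (1 : K) * ∏ i ∈ univ \ S, a i) :=
          eq_neg_of_add_eq_zero_left hb
        have hdγ : d = (γ.sum fun _ e => e) + m := by
          rw [← hα, hsplit, Finsupp.sum_add_index' (fun _ => rfl) (fun _ _ _ => rfl),
            deg_sum_single]
          simp
        apply smul_cancel
        have hsmul : m • Tr ρ (monomial α (1 : K)) = Tr ρ (Tr ρ (monomial α (1 : K))) :=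
          (Tr_self_invariant ρ _ (fun τ => Tr_invariant ρ τ _)).symm
        rw [hsmul, hTrν, Tr_neg, Tr_sum]
        refine A.neg_mem (Subalgebra.sum_mem A ?_)
        intro S hS
        obtain ⟨hSne, hSsub⟩ := Finset.mem_erase.1 hS
        have hSsub' : S ⊆ univ := Finset.mem_powerset.1 hSsub
        have hc1 : 1 ≤ S.card := Finset.card_pos.2 (Finset.nonempty_iff_ne_empty.2 hSne)
        have hc2 : S.card ≤ m := by
          have := Finset.card_le_card hSsub'
          simpa using this
        -- rewrite the term
        rw [Tr_mul_inv ρ _ _ (fun τ => Tr_invariant ρ τ _)]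
        refine A.mul_mem ?_ ?_
        · -- Tr of the coefficient: an invariant homogeneous of degree S.card ≤ m
          apply Algebra.subset_adjoin
          refine ⟨fun τ => Tr_invariant ρ τ _, S.card, by omega, ?_⟩
          refine Tr_homo ρ S.card _ (fun τ => ?_)
          rw [map_prod]
          have hprod := MvPolynomial.IsHomogeneous.prod S
              (fun i => ρ τ (-(ρ (e i) (a i)))) (fun _ => 1) (fun i _ => by
                show (ρ τ (-(ρ (e i) (a i)))).IsHomogeneous 1
                rw [map_neg, rho_rho]
                exact (hlin (τ * e i) (j i)).neg)
          have hcc : (∑ _i ∈ S, 1) = S.card := by simp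
          rw [hcc] at hprod
          exact hprod
        · -- Tr of a lower-degree monomial: induction hypothesis
          have hν' : monomial γ (1 : K) * ∏ i ∈ univ \ S, a i =
              monomial (γ + ∑ i ∈ univ \ S, Finsupp.single (j i) 1) (1 : K) := by
            rw [ha]
            simp only
            rw [prodX, monomial_mul, one_mul]
          rw [hν']
          have hdeg : ((γ + ∑ i ∈ univ \ S, Finsupp.single (j i) 1 : Fin n →₀ ℕ).sum
              fun _ e => e) = (γ.sum fun _ e => e) + (m - S.card) := by
            rw [Finsupp.sum_add_index' (fun _ => rfl) (fun _ _ _ => rfl), deg_sum_single,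
              Finset.card_sdiff_of_subset hSsub']
            simp
          exact IH _ (by omega) _ hdeg
  -- now the main statement
  intro x
  constructor
  · intro hx
    apply smul_cancel
    have h1 : m • x = Tr ρ x := (Tr_self_invariant ρ x hx).symm
    rw [h1, ← support_sum_monomial_coeff x, Tr_sum]
    refine Subalgebra.sum_mem A ?_
    intro v _
    have h2 : (monomial v) (coeff v x) = C (coeff v x) * monomial v (1 : K) := by
      rw [C_mul_monomial, mul_one]
    rw [h2, Tr_C_mul]
    exact A.mul_mem (by rw [← MvPolynomial.algebraMap_eq]; exact A.algebraMap_mem _)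
      (key _ v rfl)
  · intro hx
    exact Algebra.adjoin_induction (fun g hg => hg.1)
      (fun r σ => (ρ σ).commutes r)
      (fun u v _ _ hu hv σ => by rw [map_add, hu, hv])
      (fun u v _ _ hu hv σ => by rw [map_mul, hu, hv]) hx
end

section
/- Let G be a finite group acting linearly on V = K^n over an algebraically closed field K of characteristic p > 0, let N ⊂ G be a normal subgroup of index p, and let I_{G/N} ⊆ R^G be the image of the relative trace Tr_{G/N}: R^N → R^G. Then the vanishing set of I_{G/N} in V equals the union of the fixed spaces V^σ over all σ ∈ G \ N. -/
open MvPolynomial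
open MvPolynomial

lemma sep {K : Type*} [Field K] {n : ℕ} {u w : Fin n → K} (h : u ≠ w) :
    ∃ ℓ : MvPolynomial (Fin n) K, eval w ℓ = 1 ∧ eval u ℓ = 0 := by
  obtain ⟨i, hi⟩ := Function.ne_iff.mp h
  refine ⟨C ((w i - u i)⁻¹) * (X i - C (u i)), ?_, ?_⟩ <;> simp
  · exact inv_mul_cancel₀ (sub_ne_zero.mpr (Ne.symm hi))

lemma indicator {K : Type*} [Field K] {n : ℕ} (P : Finset (Fin n → K)) (w : Fin n → K) :
    ∃ e : MvPolynomial (Fin n) K, eval w e = 1 ∧ ∀ u ∈ P, u ≠ w → eval u e = 0 := by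
  classical
  choose! ℓ hℓ1 hℓ0 using fun u (h : u ≠ w) => sep (K := K) h
  refine ⟨∏ u ∈ P.erase w, ℓ u, ?_, ?_⟩
  · rw [map_prod]
    exact Finset.prod_eq_one fun u hu => hℓ1 u (Finset.ne_of_mem_erase hu)
  · intro u hu hne
    rw [map_prod]
    exact Finset.prod_eq_zero (Finset.mem_erase.mpr ⟨hne, hu⟩) (hℓ0 u hne)

lemma onezero {K : Type*} [Field K] {n : ℕ} (T S : Finset (Fin n → K))
    (hd : ∀ t ∈ T, ∀ s ∈ S, t ≠ s) :
    ∃ h₀ : MvPolynomial (Fin n) K, (∀ t ∈ T, eval t h₀ = 1) ∧ (∀ s ∈ S, eval s h₀ = 0) := by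
  classical
  choose e he1 he0 using fun t : (Fin n → K) => indicator (T ∪ S) t
  refine ⟨∑ t ∈ T, e t, ?_, ?_⟩
  · intro t ht
    rw [map_sum]
    rw [Finset.sum_eq_single t]
    · exact he1 t
    · intro t' ht' hne
      exact he0 t' t (Finset.mem_union_left _ ht) (Ne.symm hne)
    · exact fun h => absurd ht h
  · intro s hs
    rw [map_sum]
    refine Finset.sum_eq_zero fun t ht => he0 t s (Finset.mem_union_right _ hs) ?_
    exact (hd t ht s hs).symm

lemma quotord {G : Type*} [Group G] [Fintype G] {p : ℕ} [Fact p.Prime]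
    (N : Subgroup G) [N.Normal] (hidx : N.index = p) {σ : G} (hσ : σ ∉ N) :
    orderOf (σ : G ⧸ N) = p := by
  have hcard : Nat.card (G ⧸ N) = p := hidx
  have hne : (σ : G ⧸ N) ≠ 1 := by
    simpa [QuotientGroup.eq_one_iff] using hσ
  have hdvd : orderOf (σ : G ⧸ N) ∣ p := hcard ▸ orderOf_dvd_natCard _
  rcases (Fact.out : p.Prime).eq_one_or_self_of_dvd _ hdvd with h | h
  · exact absurd (orderOf_eq_one_iff.mp h) hne
  · exact h

lemma pow_not_mem {G : Type*} [Group G] [Fintype G] {p : ℕ} [Fact p.Prime]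
    (N : Subgroup G) [N.Normal] (hidx : N.index = p) {τ : G} (hτ : τ ∉ N)
    {j : ℕ} (hj0 : j ≠ 0) (hjp : j < p) : τ ^ j ∉ N := by
  intro hmem
  have h1 : ((τ : G ⧸ N)) ^ j = 1 := by
    have : ((τ ^ j : G) : G ⧸ N) = 1 := (QuotientGroup.eq_one_iff _).mpr hmem
    simpa using this
  have := orderOf_dvd_of_pow_eq_one h1
  rw [quotord N hidx hτ] at this
  exact absurd (Nat.le_of_dvd (Nat.pos_of_ne_zero hj0) this) (not_le.mpr hjp)

lemma decomp {G : Type*} [Group G] [Fintype G] {p : ℕ} [Fact p.Prime]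
    (N : Subgroup G) (hN : N.Normal) (hidx : N.index = p) {σ : G} (hσ : σ ∉ N) (g : G) :
    ∃ ν ∈ N, ∃ m : ℤ, g = ν * σ ^ m := by
  have htop : Subgroup.zpowers (σ : G ⧸ N) = ⊤ := by
    apply Subgroup.eq_top_of_card_eq
    rw [Nat.card_zpowers, quotord N hidx hσ]
    exact hidx.symm
  have : (g : G ⧸ N) ∈ Subgroup.zpowers (σ : G ⧸ N) := htop ▸ Subgroup.mem_top _
  obtain ⟨m, hm⟩ := this
  have hm' : ((σ ^ m : G) : G ⧸ N) = (g : G ⧸ N) := by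
    simpa [QuotientGroup.mk_zpow] using hm
  have hw : (g⁻¹ * σ ^ m)⁻¹ ∈ N := by
    exact N.inv_mem ((QuotientGroup.eq (s := N)).mp hm'.symm)
  refine ⟨σ ^ m * (g⁻¹ * σ ^ m)⁻¹ * (σ ^ m)⁻¹, ?_, m, ?_⟩
  · exact hN.conj_mem _ hw _
  · group

/-- Let `G` be a finite group acting linearly on `V = Kⁿ`, `K`
algebraically closed of characteristic `p`, and `N ⊴ G` of index `p`. The vanishing
set in `V` of the image `I_{G/N}` of the relative trace `Tr_{G/N} : R^N → R^G`
(given by `h ↦ ∑_{j<p} σʲ(h)` for any `σ ∉ N`) equals the union of the fixed spaces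
`V^σ` over `σ ∈ G \ N`. -/
theorem stmt5 {K : Type*} [Field K] [IsAlgClosed K] {n : ℕ} {p : ℕ} [Fact p.Prime]
    [CharP K p] {G : Type*} [Group G] [Fintype G]
    (ρ : G →* (MvPolynomial (Fin n) K ≃ₐ[K] MvPolynomial (Fin n) K))
    (hlin : ∀ (σ : G) (i : Fin n), (ρ σ (X i)).IsHomogeneous 1)
    (π : G →* ((Fin n → K) ≃ₗ[K] (Fin n → K)))
    (hcompat : ∀ (σ : G) (f : MvPolynomial (Fin n) K) (v : Fin n → K),
      eval v (ρ σ f) = eval (π σ⁻¹ v) f)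
    (N : Subgroup G) [N.Normal] (hidx : N.index = p) :
    {v : Fin n → K | ∀ f : MvPolynomial (Fin n) K,
        (∃ τ, τ ∉ N ∧ ∃ h, (∀ ν ∈ N, ρ ν h = h) ∧
          f = ∑ j ∈ Finset.range p, ρ (τ ^ j) h) →
        eval v f = 0} =
      {v : Fin n → K | ∃ σ, σ ∉ N ∧ π σ v = v} := by
  classical
  have hp : p.Prime := Fact.out
  have πmul : ∀ (a b : G) (w : Fin n → K), π (a * b) w = π a (π b w) := by
    intro a b w; rw [map_mul]; rfl
  have πone : ∀ w : Fin n → K, π 1 w = w := by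
    intro w; rw [map_one]; rfl
  have ρmul : ∀ (a b : G) (q : MvPolynomial (Fin n) K), ρ (a * b) q = ρ a (ρ b q) := by
    intro a b q; rw [map_mul]; rfl
  ext v
  simp only [Set.mem_setOf_eq]
  constructor
  · -- LHS → RHS
    intro hv
    by_contra hcon
    push_neg at hcon
    have hne : N ≠ ⊤ := by
      intro h
      rw [h, Subgroup.index_top] at hidx
      exact hp.ne_one hidx.symm
    obtain ⟨τ, -, hτ⟩ := SetLike.exists_of_lt (lt_top_iff_ne_top.mpr hne : N < ⊤)
    set Tf : Finset (Fin n → K) := Finset.image (fun ν : N => π (ν : G) v) Finset.univ with hTf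
    set Sf : Finset (Fin n → K) :=
      Finset.image (fun g : G => π g v) (Finset.univ.filter (fun g => g ∉ N)) with hSf
    have hd : ∀ t ∈ Tf, ∀ s ∈ Sf, t ≠ s := by
      intro t ht s hs hts
      rw [hTf, Finset.mem_image] at ht
      rw [hSf, Finset.mem_image] at hs
      obtain ⟨ν, -, rfl⟩ := ht
      obtain ⟨g, hg, rfl⟩ := hs
      rw [Finset.mem_filter] at hg
      have hgN : g ∉ N := hg.2
      have hfix : π (g⁻¹ * ↑ν) v = v := by
        rw [πmul, hts, ← πmul, inv_mul_cancel, πone]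
      have hmem : g⁻¹ * ↑ν ∉ N := by
        intro hmem
        have hg1 : g⁻¹ ∈ N := by simpa using N.mul_mem hmem (N.inv_mem ν.2)
        exact hgN (by simpa using N.inv_mem hg1)
      exact hcon _ hmem hfix
    obtain ⟨h₀, hT1, hS0⟩ := onezero Tf Sf hd
    set h : MvPolynomial (Fin n) K := ∏ ν : N, ρ (ν : G) h₀ with hh
    have hinv : ∀ μ ∈ N, ρ μ h = h := by
      intro μ hμ
      rw [hh, map_prod]
      calc (∏ ν : N, ρ μ (ρ (ν : G) h₀))
          = ∏ ν : N, ρ (((⟨μ, hμ⟩ : N) * ν : N) : G) h₀ := by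
            refine Finset.prod_congr rfl fun ν _ => ?_
            rw [Subgroup.coe_mul, ρmul]
        _ = ∏ ν : N, ρ (ν : G) h₀ :=
            Fintype.prod_equiv (Equiv.mulLeft (⟨μ, hμ⟩ : N)) _ _ fun ν => rfl
    have heval : ∀ g : G, eval v (ρ g h) = ∏ ν : N, eval (π (g * (ν : G))⁻¹ v) h₀ := by
      intro g
      rw [hh, map_prod, map_prod]
      refine Finset.prod_congr rfl fun ν _ => ?_
      rw [← ρmul, hcompat]
    set f : MvPolynomial (Fin n) K := ∑ j ∈ Finset.range p, ρ (τ ^ j) h with hf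
    have hval : eval v f = 1 := by
      rw [hf, map_sum]
      rw [Finset.sum_eq_single 0]
      · rw [pow_zero, heval]
        refine Finset.prod_eq_one fun ν _ => ?_
        apply hT1
        rw [hTf, Finset.mem_image]
        exact ⟨ν⁻¹, Finset.mem_univ _, by rw [one_mul]; rfl⟩
      · intro j hj hj0
        rw [heval]
        refine Finset.prod_eq_zero (Finset.mem_univ (1 : N)) ?_
        apply hS0
        rw [hSf, Finset.mem_image]
        refine ⟨(τ ^ j * ((1 : N) : G))⁻¹, ?_, rfl⟩
        rw [Finset.mem_filter]
        refine ⟨Finset.mem_univ _, ?_⟩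
        intro hmem
        have : τ ^ j ∈ N := by
          have := N.inv_mem hmem
          simpa using this
        exact pow_not_mem N hidx hτ hj0 (Finset.mem_range.mp hj) this
      · intro h0
        exact absurd (Finset.mem_range.mpr hp.pos) h0
    have := hv f ⟨τ, hτ, h, hinv, rfl⟩
    rw [hval] at this
    exact one_ne_zero this
  · -- RHS → LHS
    rintro ⟨σ, hσ, hfix⟩ f ⟨τ, hτ, h, hinv, rfl⟩
    -- stabilizer of v is a subgroup
    have hstab : ∀ m : ℤ, π (σ ^ m) v = v := by
      have hnat : ∀ k : ℕ, π (σ ^ k) v = v := by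
        intro k
        induction k with
        | zero => rw [pow_zero]; exact πone v
        | succ k ih => rw [pow_succ, πmul, hfix, ih]
      intro m
      cases m with
      | ofNat k => simpa using hnat k
      | negSucc k =>
        have h1 : π (σ ^ (k + 1)) v = v := hnat (k + 1)
        have : π (σ ^ Int.negSucc k) (π (σ ^ (k + 1)) v) = v := by
          rw [← πmul, zpow_negSucc, inv_mul_cancel, πone]
        rwa [h1] at this
    have hNinv : ∀ ν ∈ N, ∀ w : Fin n → K, eval (π ν w) h = eval w h := by
      intro ν hν w
      have hc := hcompat ν⁻¹ h w
      rw [hinv ν⁻¹ (N.inv_mem hν), inv_inv] at hc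
      exact hc.symm
    rw [map_sum]
    have hterm : ∀ j ∈ Finset.range p, eval v (ρ (τ ^ j) h) = eval v h := by
      intro j _
      rw [hcompat]
      obtain ⟨ν, hν, m, hg⟩ := decomp N inferInstance hidx hσ ((τ ^ j)⁻¹)
      rw [hg, πmul, hstab m, hNinv ν hν]
    rw [Finset.sum_congr rfl hterm, Finset.sum_const, Finset.card_range, nsmul_eq_mul,
      CharP.cast_eq_zero K p, zero_mul]
end

section
/- Let R = K[x_1,...,x_n] with a finite group G acting linearly, K algebraically closed, and suppose f_1, f_2, f_3 ∈ R^G and g_1, g_2, g_3 ∈ R satisfy f_i = σ(g_i) − g_i for a fixed K-algebra automorphism σ of R arising from the group action. Assume f_1, f_2, f_3 form a regular sequence in R. Then the elements u_{ij} := f_i g_j − f_j g_i satisfy f_1 u_{23} − f_2 u_{13} + f_3 u_{12} = 0, and if moreover each u_{ij} lies in R^G, the sequence f_1, f_2, f_3 is not a regular sequence in R^G. -/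
open MvPolynomial

private lemma constCoeff_commutes {K : Type*} [CommRing K] {n : ℕ}
    (τ : MvPolynomial (Fin n) K ≃ₐ[K] MvPolynomial (Fin n) K)
    (hτ : ∀ i, (τ (X i)).IsHomogeneous 1) (p : MvPolynomial (Fin n) K) :
    constantCoeff (τ p) = constantCoeff p := by
  have h : (constantCoeff.comp (τ : MvPolynomial (Fin n) K →+* MvPolynomial (Fin n) K))
      = constantCoeff := by
    apply MvPolynomial.ringHom_ext
    · intro r
      have h2 : τ (C r) = C r := by simpa [MvPolynomial.algebraMap_eq] using τ.commutes r
      simp [RingHom.comp_apply, h2]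
    · intro i
      simp only [RingHom.comp_apply, constantCoeff_X, constantCoeff_eq]
      exact (hτ i).coeff_eq_zero (by simp)
  exact congrFun (congrArg (fun f => f.toFun) h) p

/-- The invariant subalgebra of a group action on a polynomial ring by
`K`-algebra automorphisms. -/
def invAlg {K : Type*} [CommRing K] {n : ℕ} {G : Type*} [Group G]
    (ρ : G →* (MvPolynomial (Fin n) K ≃ₐ[K] MvPolynomial (Fin n) K)) :
    Subalgebra K (MvPolynomial (Fin n) K) where
  carrier := {f | ∀ σ, ρ σ f = f}
  mul_mem' := by intro a b ha hb σ; simp [map_mul, ha σ, hb σ]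
  add_mem' := by intro a b ha hb σ; simp [map_add, ha σ, hb σ]
  algebraMap_mem' := by intro r σ; simpa using (ρ σ).commutes r

/-- If `fᵢ = σ(gᵢ) − gᵢ` with the `fᵢ` invariant, then
`f₁u₂₃ − f₂u₁₃ + f₃u₁₂ = 0` for `u_{ij} = fᵢgⱼ − fⱼgᵢ`, and if the `fᵢ` form a
regular sequence in `R` and all `u_{ij}` are invariant, then `f₁,f₂,f₃` is not a
regular sequence in `R^G`. -/
theorem stmt6 {K : Type*} [Field K] [IsAlgClosed K] {n : ℕ} {G : Type*} [Group G] [Fintype G]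
    (ρ : G →* (MvPolynomial (Fin n) K ≃ₐ[K] MvPolynomial (Fin n) K))
    (hlin : ∀ (σ : G) (i : Fin n), (ρ σ (X i)).IsHomogeneous 1)
    (σ : G) (f g : Fin 3 → MvPolynomial (Fin n) K)
    (hfG : ∀ i, f i ∈ invAlg ρ)
    (hhom : ∀ i, ∃ d : ℕ, 0 < d ∧ (f i).IsHomogeneous d)
    (hfg : ∀ i, f i = ρ σ (g i) - g i)
    (hreg : ∀ (i : Fin 3) (x : MvPolynomial (Fin n) K),
      f i * x ∈ Ideal.span (f '' {j | j < i}) → x ∈ Ideal.span (f '' {j | j < i})) :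
    f 0 * (f 1 * g 2 - f 2 * g 1) - f 1 * (f 0 * g 2 - f 2 * g 0)
        + f 2 * (f 0 * g 1 - f 1 * g 0) = 0 ∧
    ((∀ i j, f i * g j - f j * g i ∈ invAlg ρ) →
      ¬ (∀ (i : Fin 3) (x : invAlg ρ),
          (⟨f i, hfG i⟩ : invAlg ρ) * x ∈
            Ideal.span ((fun j => (⟨f j, hfG j⟩ : invAlg ρ)) '' {j | j < i}) →
          x ∈ Ideal.span ((fun j => (⟨f j, hfG j⟩ : invAlg ρ)) '' {j | j < i}))) := by
  constructor
  · ring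
  · intro hu hreg'
    -- Step 1: use regularity of f 2 in the invariant ring
    have hset2 : ((fun j => (⟨f j, hfG j⟩ : invAlg ρ)) '' {j | j < 2})
        = {(⟨f 0, hfG 0⟩ : invAlg ρ), ⟨f 1, hfG 1⟩} := by
      have hS : {j : Fin 3 | j < 2} = {0, 1} := by
        ext j; fin_cases j <;> simp <;> decide
      rw [hS, Set.image_insert_eq, Set.image_singleton]
    have hmem : (⟨f 2, hfG 2⟩ : invAlg ρ) * ⟨f 0 * g 1 - f 1 * g 0, hu 0 1⟩ ∈
        Ideal.span ((fun j => (⟨f j, hfG j⟩ : invAlg ρ)) '' {j | j < 2}) := by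
      rw [hset2]
      refine Ideal.mem_span_pair.2
        ⟨-⟨f 1 * g 2 - f 2 * g 1, hu 1 2⟩, ⟨f 0 * g 2 - f 2 * g 0, hu 0 2⟩, ?_⟩
      apply Subtype.ext
      show -(f 1 * g 2 - f 2 * g 1) * f 0 + (f 0 * g 2 - f 2 * g 0) * f 1
          = f 2 * (f 0 * g 1 - f 1 * g 0)
      ring
    obtain ⟨a, b, hab⟩ :=
      Ideal.mem_span_pair.1 (hset2 ▸ hreg' 2 ⟨f 0 * g 1 - f 1 * g 0, hu 0 1⟩ hmem)
    have hab' : a.val * f 0 + b.val * f 1 = f 0 * g 1 - f 1 * g 0 :=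
      congrArg Subtype.val hab
    -- Step 2: use regularity of f 1 in R
    have hset1 : f '' {j : Fin 3 | j < 1} = {f 0} := by
      have hS : {j : Fin 3 | j < 1} = {0} := by
        ext j; fin_cases j <;> simp <;> decide
      rw [hS, Set.image_singleton]
    have h1 : f 1 * (g 0 + b.val) ∈ Ideal.span (f '' {j | j < 1}) := by
      rw [hset1, Ideal.mem_span_singleton]
      exact ⟨g 1 - a.val, by linear_combination hab'⟩
    have h2 := hreg 1 _ h1
    rw [hset1, Ideal.mem_span_singleton] at h2
    obtain ⟨c, hc⟩ := h2
    -- Step 3: apply σ and cancel f 0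
    have hb : ρ σ b.val = b.val := b.2 σ
    have hf0 : ρ σ (f 0) = f 0 := (hfG 0) σ
    have hσ : ρ σ (g 0) + b.val = f 0 * ρ σ c := by
      have := congrArg (ρ σ) hc
      simpa [map_add, map_mul, hb, hf0] using this
    have key : f 0 * (ρ σ c - c - 1) = 0 := by
      linear_combination -hσ + hc - hfg 0
    have h0 : f 0 * (ρ σ c - c - 1) ∈ Ideal.span (f '' {j : Fin 3 | j < 0}) := by
      rw [key]; exact Ideal.zero_mem _
    have h0' := hreg 0 _ h0
    have hempty : {j : Fin 3 | j < 0} = ∅ := by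
      ext j; simp
    rw [hempty, Set.image_empty, Ideal.span_empty, Ideal.mem_bot] at h0'
    -- Step 4: constant coefficients give 1 = 0 in K
    have hcc := congrArg constantCoeff h0'
    rw [map_sub, map_sub, map_one, constCoeff_commutes (ρ σ) (hlin σ) c] at hcc
    simp at hcc
end

section
/- Let R be a commutative ring and I ⊂ R an ideal containing a regular sequence a_1, a_2 of length 2. Then for every short exact sequence 0 → R → M → R/I → 0 of R-modules, there exists m ∈ M mapping to 1 + I in R/I with I·m = 0; equivalently, the sequence splits. -/
/-- If an ideal `I` of a commutative ring `R` contains a regular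
sequence `a₁, a₂` of length 2, then every short exact sequence
`0 → R → M → R/I → 0` splits: there is `m ∈ M` with `ψ(m) = 1 + I` and `I·m = 0`. -/
theorem stmt7 {R : Type*} [CommRing R] (I : Ideal R) (a₁ a₂ : R)
    (ha₁I : a₁ ∈ I) (ha₂I : a₂ ∈ I)
    (ha₁ : ∀ x : R, a₁ * x = 0 → x = 0)
    (ha₂ : ∀ x : R, a₂ * x ∈ Ideal.span {a₁} → x ∈ Ideal.span {a₁})
    (M : Type*) [AddCommGroup M] [Module R M]
    (φ : R →ₗ[R] M) (ψ : M →ₗ[R] R ⧸ I)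
    (hφ : Function.Injective φ) (hψ : Function.Surjective ψ)
    (hexact : LinearMap.range φ = LinearMap.ker ψ) :
    ∃ m : M, ψ m = (1 : R ⧸ I) ∧ ∀ x ∈ I, x • m = 0 := by
  obtain ⟨m₀, hm₀⟩ := hψ 1
  have hsmul1 : ∀ x : R, x • (1 : R ⧸ I) = Ideal.Quotient.mk I x := by
    intro x
    rw [← map_one (Ideal.Quotient.mk I)]
    rw [show x • Ideal.Quotient.mk I 1 = Ideal.Quotient.mk I (x * 1) from rfl]
    rw [mul_one]
  have key : ∀ x ∈ I, ∃ r : R, φ r = x • m₀ := by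
    intro x hx
    have : x • m₀ ∈ LinearMap.ker ψ := by
      rw [LinearMap.mem_ker, map_smul, hm₀, hsmul1,
        Ideal.Quotient.eq_zero_iff_mem]
      exact hx
    rw [← hexact] at this
    exact this
  choose f hf using key
  have comm : ∀ x, ∀ hx : x ∈ I, ∀ y, ∀ hy : y ∈ I, y * f x hx = x * f y hy := by
    intro x hx y hy
    apply hφ
    have h1 : φ (y * f x hx) = y • φ (f x hx) := by
      rw [← smul_eq_mul, map_smul]
    have h2 : φ (x * f y hy) = x • φ (f y hy) := by
      rw [← smul_eq_mul, map_smul]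
    rw [h1, h2, hf x hx, hf y hy, smul_comm]
  have hu : a₁ ∣ f a₁ ha₁I := by
    rw [← Ideal.mem_span_singleton]
    apply ha₂
    rw [comm a₁ ha₁I a₂ ha₂I, Ideal.mem_span_singleton]
    exact Dvd.intro _ rfl
  obtain ⟨c, hc⟩ := hu
  have hfx : ∀ x, ∀ hx : x ∈ I, f x hx = x * c := by
    intro x hx
    have h : a₁ * (f x hx - x * c) = 0 := by
      have := comm x hx a₁ ha₁I
      rw [hc] at this
      ring_nf
      ring_nf at this
      linear_combination this
    exact sub_eq_zero.mp (ha₁ _ h)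
  refine ⟨m₀ - φ c, ?_, ?_⟩
  · rw [map_sub, hm₀]
    have : φ c ∈ LinearMap.ker ψ := hexact ▸ LinearMap.mem_range_self φ c
    rw [LinearMap.mem_ker] at this
    rw [this, sub_zero]
  · intro x hx
    rw [smul_sub, ← hf x hx, hfx x hx]
    rw [show x * c = x • c from rfl, map_smul, sub_self]
end

section
/- (Graded Hartshorne connectedness, ideal version) Let R be a graded commutative ring with R_0 = K a field, and let I, J ⊆ R be homogeneous ideals with I·J = {0}. If I + J contains a regular sequence of length 2, then I ⊆ J or J ⊆ I. -/
open DirectSum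

/-- In a connected ℕ-graded ring, an element whose square is itself and whose degree-zero
component vanishes is zero. -/
lemma idem_aux_stmt8 {K A : Type*} [Field K] [CommRing A] [Algebra K A]
    (𝒜 : ℕ → Submodule K A) [GradedAlgebra 𝒜]
    (c : A) (hc : c * c = c) (h00 : (DirectSum.decompose 𝒜 c 0 : A) = 0) : c = 0 := by
  classical
  have key : ∀ n, (DirectSum.decompose 𝒜 c n : A) = 0 := by
    intro n
    induction n using Nat.strong_induction_on with
    | _ n ih =>
      rcases Nat.eq_zero_or_pos n with rfl | hn
      · exact h00
      · have hrr : DirectSum.decompose 𝒜 c * DirectSum.decompose 𝒜 c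
            = DirectSum.decompose 𝒜 c := by
          rw [← DirectSum.decompose_mul, hc]
        have hm := DirectSum.coe_mul_apply 𝒜 (DirectSum.decompose 𝒜 c)
          (DirectSum.decompose 𝒜 c) n
        rw [hrr] at hm
        rw [hm]
        apply Finset.sum_eq_zero
        intro ij hij
        rcases Finset.mem_filter.mp hij with ⟨-, hsum⟩
        rcases Nat.eq_zero_or_pos ij.1 with h1 | h1
        · rw [h1, h00, zero_mul]
        · have hlt : ij.2 < n := by omega
          rw [ih ij.2 hlt, mul_zero]
  have hs := DirectSum.sum_support_decompose 𝒜 c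
  rw [← hs]
  exact Finset.sum_eq_zero fun i _ => key i

/-- A connected ℕ-graded ring has only trivial idempotents. -/
lemma idem_cases_stmt8 {K A : Type*} [Field K] [CommRing A] [Algebra K A]
    (𝒜 : ℕ → Submodule K A) [GradedAlgebra 𝒜]
    (h0 : (𝒜 0 : Set A) = Set.range (algebraMap K A))
    (c : A) (hc : c * c = c) : c = 0 ∨ c = 1 := by
  classical
  rcases subsingleton_or_nontrivial A with h | h
  · exact Or.inl (Subsingleton.elim _ _)
  have hmem : (DirectSum.decompose 𝒜 c 0 : A) ∈ (𝒜 0 : Set A) :=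
    (DirectSum.decompose 𝒜 c 0).2
  rw [h0] at hmem
  obtain ⟨k, hk⟩ := hmem
  have hproj : GradedRing.projZeroRingHom 𝒜 c = (DirectSum.decompose 𝒜 c 0 : A) := rfl
  have hc0 : (DirectSum.decompose 𝒜 c 0 : A) * (DirectSum.decompose 𝒜 c 0 : A)
      = (DirectSum.decompose 𝒜 c 0 : A) := by
    rw [← hproj, ← map_mul, hc]
  have hkk : k * k = k := by
    apply (algebraMap K A).injective
    rw [map_mul, hk, hc0]
  rcases eq_or_ne k 0 with hk0 | hk0
  · left
    apply idem_aux_stmt8 𝒜 c hc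
    rw [← hk, hk0, map_zero]
  · have hk1 : k = 1 := by
      have h2 : k * k = k * 1 := by rw [mul_one]; exact hkk
      exact mul_left_cancel₀ hk0 h2
    right
    have hc1 : (DirectSum.decompose 𝒜 c 0 : A) = 1 := by rw [← hk, hk1, map_one]
    have hcc : (1 - c) * (1 - c) = 1 - c := by ring_nf; linear_combination hc
    have h1c0 : (DirectSum.decompose 𝒜 (1 - c) 0 : A) = 0 := by
      have : GradedRing.projZeroRingHom 𝒜 (1 - c) = 0 := by
        rw [map_sub, map_one, hproj, hc1, sub_self]
      rw [← this]; rfl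
    have := idem_aux_stmt8 𝒜 (1 - c) hcc h1c0
    linear_combination -this

/-- **graded Hartshorne connectedness, ideal version.** Let `A` be an
`ℕ`-graded commutative ring with degree-0 part the field `K`, and let `I, J` be
homogeneous ideals with `I·J = 0`. If `I + J` contains a regular sequence of
length 2, then `I ⊆ J` or `J ⊆ I`. -/
theorem stmt8 {K A : Type*} [Field K] [CommRing A] [Algebra K A]
    (𝒜 : ℕ → Submodule K A) [GradedAlgebra 𝒜]
    (h0 : (𝒜 0 : Set A) = Set.range (algebraMap K A))
    (I J : Ideal A) (hI : I.IsHomogeneous 𝒜) (hJ : J.IsHomogeneous 𝒜)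
    (hIJ : I * J = ⊥)
    (a₁ a₂ : A) (ha₁I : a₁ ∈ I ⊔ J) (ha₂I : a₂ ∈ I ⊔ J)
    (ha₁ : ∀ x : A, a₁ * x = 0 → x = 0)
    (ha₂ : ∀ x : A, a₂ * x ∈ Ideal.span {a₁} → x ∈ Ideal.span {a₁}) :
    I ≤ J ∨ J ≤ I := by
  have hz : ∀ x ∈ I, ∀ y ∈ J, x * y = 0 := by
    intro x hx y hy
    have h : x * y ∈ I * J := Ideal.mul_mem_mul hx hy
    rw [hIJ] at h
    exact h
  obtain ⟨i₁, hi₁, j₁, hj₁, hadd₁⟩ := Submodule.mem_sup.mp ha₁I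
  obtain ⟨i₂, hi₂, j₂, hj₂, hadd₂⟩ := Submodule.mem_sup.mp ha₂I
  -- i₁ ∈ Span{a₁}
  have hia : a₂ * i₁ ∈ Ideal.span {a₁} := by
    have h1 : i₁ * j₂ = 0 := hz i₁ hi₁ j₂ hj₂
    have h2 : i₂ * j₁ = 0 := hz i₂ hi₂ j₁ hj₁
    have : a₂ * i₁ = a₁ * i₂ := by
      rw [← hadd₁, ← hadd₂]; ring_nf; linear_combination h1 - h2
    rw [this]
    exact Ideal.mem_span_singleton.mpr ⟨i₂, rfl⟩
  have hja : a₂ * j₁ ∈ Ideal.span {a₁} := by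
    have h1 : i₁ * j₂ = 0 := hz i₁ hi₁ j₂ hj₂
    have h2 : i₂ * j₁ = 0 := hz i₂ hi₂ j₁ hj₁
    have : a₂ * j₁ = a₁ * j₂ := by
      rw [← hadd₁, ← hadd₂]; ring_nf; linear_combination h2 - h1
    rw [this]
    exact Ideal.mem_span_singleton.mpr ⟨j₂, rfl⟩
  obtain ⟨cc, hcc⟩ := Ideal.mem_span_singleton'.mp (ha₂ i₁ hia)
  obtain ⟨ee, hee⟩ := Ideal.mem_span_singleton'.mp (ha₂ j₁ hja)
  -- cc + ee = 1
  have hsum : cc + ee = 1 := by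
    have h : a₁ * (cc + ee - 1) = 0 := by
      have : cc * a₁ + ee * a₁ = a₁ := by rw [hcc, hee, hadd₁]
      linear_combination this
    have h2 := ha₁ _ h
    linear_combination h2
  -- cc * ee = 0
  have hprod : cc * ee = 0 := by
    have hij : i₁ * j₁ = 0 := hz i₁ hi₁ j₁ hj₁
    have h : a₁ * (a₁ * (cc * ee)) = 0 := by
      calc a₁ * (a₁ * (cc * ee)) = (cc * a₁) * (ee * a₁) := by ring
      _ = i₁ * j₁ := by rw [hcc, hee]
      _ = 0 := hij
    exact ha₁ _ (ha₁ _ h)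
  have hidem : cc * cc = cc := by
    have : cc * (cc + ee) = cc := by rw [hsum, mul_one]
    linear_combination this - hprod
  rcases idem_cases_stmt8 𝒜 h0 cc hidem with h | h
  · -- cc = 0 : i₁ = 0, a₁ = j₁ ∈ J, I = 0
    left
    intro x hx
    have hi0 : i₁ = 0 := by rw [← hcc, h, zero_mul]
    have ha1J : a₁ = j₁ := by rw [← hadd₁, hi0, zero_add]
    have : a₁ * x = 0 := by
      rw [ha1J, mul_comm]
      exact hz x hx j₁ hj₁
    rw [ha₁ x this]
    exact J.zero_mem
  · -- cc = 1 : ee = 0, j₁ = 0, a₁ = i₁ ∈ I, J = 0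
    right
    intro y hy
    have he0 : ee = 0 := by linear_combination hsum - h
    have hj0 : j₁ = 0 := by rw [← hee, he0, zero_mul]
    have ha1I' : a₁ = i₁ := by rw [← hadd₁, hj0, add_zero]
    have : a₁ * y = 0 := by
      rw [ha1I']
      exact hz i₁ hi₁ y hy
    rw [ha₁ y this]
    exact I.zero_mem
end

section
/- (Noether's degree bound for separating invariants) Let G be a finite group acting linearly on V = K^n and on R = K[x_1,...,x_n]. With additional variables t and y, form F(t,y) := Π_{σ∈G} (y − Σ_{i=1}^n σ(x_i) t^{i−1}) ∈ R^G[t,y]. If all coefficients of F (as a polynomial in t, y with coefficients in R) agree when evaluated at two points v, w ∈ K^n, then v and w lie in the same G-orbit. -/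
open MvPolynomial

/-- **Noether's degree bound for separating invariants.** For a finite
group `G` acting linearly on `V = Kⁿ`, form `F(t,y) = ∏_{σ∈G} (y − ∑ᵢ σ(xᵢ) tⁱ⁻¹)`
in `R[t][y]`. If all coefficients of `F` agree when evaluated at two points
`v, w ∈ Kⁿ`, then `v` and `w` lie in the same `G`-orbit. -/
theorem stmt9 {K : Type*} [Field K] {n : ℕ} {G : Type*} [Group G] [Fintype G]
    (ρ : G →* (MvPolynomial (Fin n) K ≃ₐ[K] MvPolynomial (Fin n) K))
    (hlin : ∀ (σ : G) (i : Fin n), (ρ σ (X i)).IsHomogeneous 1)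
    (π : G →* ((Fin n → K) ≃ₗ[K] (Fin n → K)))
    (hcompat : ∀ (σ : G) (f : MvPolynomial (Fin n) K) (v : Fin n → K),
      eval v (ρ σ f) = eval (π σ⁻¹ v) f)
    (F : Polynomial (Polynomial (MvPolynomial (Fin n) K)))
    (hF : F = ∏ σ : G, (Polynomial.X - Polynomial.C
      (∑ i : Fin n, Polynomial.C (ρ σ (X i)) * Polynomial.X ^ (i : ℕ))))
    (v w : Fin n → K)
    (hvw : Polynomial.map (Polynomial.mapRingHom (eval v)) F =
           Polynomial.map (Polynomial.mapRingHom (eval w)) F) :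
    ∃ σ : G, π σ v = w := by
  classical
  set p : (Fin n → K) → Polynomial K :=
    fun u => ∑ i : Fin n, Polynomial.C (u i) * Polynomial.X ^ (i : ℕ) with hp
  have hmap : ∀ u : Fin n → K,
      Polynomial.map (Polynomial.mapRingHom (eval u)) F =
        ∏ σ : G, (Polynomial.X - Polynomial.C (p (π σ⁻¹ u))) := by
    intro u
    subst hF
    rw [Polynomial.map_prod]
    refine Finset.prod_congr rfl fun σ _ => ?_
    rw [Polynomial.map_sub, Polynomial.map_X, Polynomial.map_C]
    congr 1
    simp only [Polynomial.coe_mapRingHom, Polynomial.map_sum, Polynomial.map_mul,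
      Polynomial.map_C, Polynomial.map_pow, Polynomial.map_X, hcompat, eval_X, hp]
  have h0 : Polynomial.eval (p v) (∏ σ : G, (Polynomial.X - Polynomial.C (p (π σ⁻¹ w)))) = 0 := by
    rw [← hmap, ← hvw, hmap, Polynomial.eval_prod]
    refine Finset.prod_eq_zero (Finset.mem_univ (1 : G)) ?_
    simp
  rw [Polynomial.eval_prod] at h0
  obtain ⟨σ, -, hσ⟩ := Finset.prod_eq_zero_iff.mp h0
  have hpeq : p v = p (π σ⁻¹ w) := by
    simpa [sub_eq_zero] using hσ
  have hv : v = π σ⁻¹ w := by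
    funext i
    have := congrArg (fun q => Polynomial.coeff q (i : ℕ)) hpeq
    simpa [hp, Polynomial.coeff_X_pow, Fin.val_eq_val, Finset.sum_ite_eq'] using this
  refine ⟨σ, ?_⟩
  rw [hv, map_inv]
  exact (π σ).apply_symm_apply w
end

section
/- Let G be a finite group acting linearly on V = K^n with K any field. Two points v, w ∈ V lie in the same G-orbit if and only if f(v) = f(w) for every invariant f ∈ R^G = K[x_1,...,x_n]^G. -/
open MvPolynomial

/-- For a finite group `G` acting linearly on `V = Kⁿ`, two points
`v, w ∈ V` lie in the same `G`-orbit if and only if every invariant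
`f ∈ K[x₁,…,xₙ]^G` satisfies `f(v) = f(w)`. -/
theorem stmt10 {K : Type*} [Field K] {n : ℕ} {G : Type*} [Group G] [Fintype G]
    (ρ : G →* (MvPolynomial (Fin n) K ≃ₐ[K] MvPolynomial (Fin n) K))
    (hlin : ∀ (σ : G) (i : Fin n), (ρ σ (X i)).IsHomogeneous 1)
    (π : G →* ((Fin n → K) ≃ₗ[K] (Fin n → K)))
    (hcompat : ∀ (σ : G) (f : MvPolynomial (Fin n) K) (v : Fin n → K),
      eval v (ρ σ f) = eval (π σ⁻¹ v) f)
    (v w : Fin n → K) :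
    (∃ σ : G, π σ v = w) ↔
      (∀ f : MvPolynomial (Fin n) K, (∀ σ, ρ σ f = f) → eval v f = eval w f) := by
  constructor
  · rintro ⟨σ, rfl⟩ f hf
    have := hcompat σ⁻¹ f v
    rw [hf, inv_inv] at this
    exact this
  · intro h
    by_contra hno
    have hne : ∀ σ : G, π σ v ≠ w := fun σ hσ => hno ⟨σ, hσ⟩
    -- choose a coordinate where each orbit point differs from w
    have hd : ∀ σ : G, ∃ i : Fin n, (π σ v) i ≠ w i := fun σ =>
      Function.ne_iff.mp (hne σ)
    choose d hd using hd
    -- g : equals 1 on the orbit of v, equals 0 at w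
    set g : MvPolynomial (Fin n) K :=
      1 - ∏ σ : G, (1 - C ((π σ v) (d σ) - w (d σ))⁻¹ * (X (d σ) - C (w (d σ))))
      with hg
    have hgw : eval w g = 0 := by
      rw [hg]
      simp only [map_sub, map_one, map_prod, map_mul, eval_C, eval_X]
      rw [Finset.prod_eq_one (fun σ _ => by simp)]
      simp
    have hgorb : ∀ τ : G, eval (π τ v) g = 1 := by
      intro τ
      rw [hg]
      simp only [map_sub, map_one, map_prod, map_mul, eval_C, eval_X]
      rw [Finset.prod_eq_zero (Finset.mem_univ τ)]
      · ring
      · have hne0 : (π τ) v (d τ) - w (d τ) ≠ 0 := sub_ne_zero.mpr (hd τ)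
        field_simp
        ring
    -- f : the product of the orbit of g, an invariant
    set f : MvPolynomial (Fin n) K := ∏ σ : G, ρ σ g with hf
    have hinv : ∀ τ : G, ρ τ f = f := by
      intro τ
      have step : ∀ σ, ρ τ (ρ σ g) = ρ (τ * σ) g := fun σ => by rw [map_mul]; rfl
      calc (ρ τ) f = ∏ σ : G, ρ τ (ρ σ g) := by rw [hf, map_prod]
        _ = ∏ σ : G, ρ (τ * σ) g := Finset.prod_congr rfl (fun σ _ => step σ)
        _ = ∏ σ : G, ρ σ g := Fintype.prod_equiv (Equiv.mulLeft τ) _ _ (fun σ => rfl)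
        _ = f := hf.symm
    have hfv : eval v f = 1 := by
      rw [hf, map_prod]
      rw [Finset.prod_congr rfl (fun σ _ => hcompat σ g v)]
      exact Finset.prod_eq_one (fun σ _ => hgorb σ⁻¹)
    have hfw : eval w f = 0 := by
      rw [hf, map_prod]
      rw [Finset.prod_congr rfl (fun σ _ => hcompat σ g w)]
      apply Finset.prod_eq_zero (Finset.mem_univ (1 : G))
      simpa using hgw
    have := h f hinv
    rw [hfv, hfw] at this
    exact one_ne_zero this
end

section
/- Let G ⊆ GL(V) be a finite group, V = K^n over an algebraically closed field K, and suppose G is not generated by reflections. Let H ⊊ G be the subgroup generated by all reflections. Then the closed sets X := ∪_{σ∈H} Z_σ and Y := ∪_{τ∈G∖H} Z_τ cover the graph Γ of the action, neither contains the other, and every irreducible component of X ∩ Y has dimension ≤ n − 2. -/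
open LinearMap

lemma graph_inf_graph_eq {K M N : Type*} [Field K] [AddCommGroup M] [Module K M]
    [AddCommGroup N] [Module K N] (f g : M →ₗ[K] N) :
    graph f ⊓ graph g = Submodule.map (LinearMap.prod LinearMap.id f) (eqLocus f g) := by
  ext ⟨x, y⟩
  simp only [Submodule.mem_inf, mem_graph_iff, Submodule.mem_map, mem_eqLocus, prod_apply,
    Function.prod, id_coe, id_eq, Prod.mk.injEq]
  constructor
  · rintro ⟨h1, h2⟩; exact ⟨x, h1 ▸ h2, rfl, h1.symm⟩
  · rintro ⟨v, hv, rfl, rfl⟩; exact ⟨rfl, hv⟩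

lemma finrank_graph_inf_graph {K M N : Type*} [Field K] [AddCommGroup M] [Module K M]
    [AddCommGroup N] [Module K N] (f g : M →ₗ[K] N) :
    Module.finrank K ↥(graph f ⊓ graph g) = Module.finrank K ↥(eqLocus f g) := by
  rw [graph_inf_graph_eq]
  have hinj : Function.Injective (LinearMap.prod (LinearMap.id : M →ₗ[K] M) f) := by
    intro a b h
    simpa using congrArg Prod.fst h
  exact (Submodule.equivMapOfInjective _ hinj _).finrank_eq.symm

/-- Let `G ⊆ GL(V)` be finite, `V = Kⁿ` with `K` algebraically
closed, and suppose `G` is not generated by reflections; let `H ⊊ G` be the subgroup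
generated by all reflections. Then `X = ∪_{σ∈H} Z_σ` and `Y = ∪_{τ∉H} Z_τ` cover the
graph `Γ` of the action, neither contains the other, and every piece
`Z_σ ∩ Z_τ` (`σ ∈ H`, `τ ∉ H`) of `X ∩ Y` has dimension `≤ n − 2`. -/
theorem stmt12 {K : Type*} [Field K] [IsAlgClosed K] {n : ℕ} {G : Type*} [Group G]
    [Fintype G] (π : G →* ((Fin n → K) ≃ₗ[K] (Fin n → K)))
    (hinj : Function.Injective π)
    (H : Subgroup G)
    (hH : H = Subgroup.closure {g : G | n - 1 ≤ Module.finrank K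
      ↥(LinearMap.eqLocus (π g).toLinearMap
        (LinearMap.id : (Fin n → K) →ₗ[K] (Fin n → K)))})
    (hHne : H ≠ ⊤)
    (Γ X Y : Set ((Fin n → K) × (Fin n → K)))
    (hΓ : Γ = ⋃ σ : G, (LinearMap.graph (π σ).toLinearMap :
      Set ((Fin n → K) × (Fin n → K))))
    (hX : X = ⋃ σ ∈ (H : Set G), (LinearMap.graph (π σ).toLinearMap :
      Set ((Fin n → K) × (Fin n → K))))
    (hY : Y = ⋃ τ ∈ {τ : G | τ ∉ H}, (LinearMap.graph (π τ).toLinearMap :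
      Set ((Fin n → K) × (Fin n → K)))) :
    X ∪ Y = Γ ∧ ¬ X ⊆ Y ∧ ¬ Y ⊆ X ∧
    (X ∩ Y = ⋃ σ ∈ (H : Set G), ⋃ τ ∈ {τ : G | τ ∉ H},
      ((LinearMap.graph (π σ).toLinearMap ⊓ LinearMap.graph (π τ).toLinearMap :
        Submodule K ((Fin n → K) × (Fin n → K))) : Set _)) ∧
    (∀ σ ∈ H, ∀ τ ∉ H, Module.finrank K
      ↥(LinearMap.graph (π σ).toLinearMap ⊓ LinearMap.graph (π τ).toLinearMap) ≤ n - 2) := by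
  -- τ ∉ H implies τ is not a reflection
  have hrefl : ∀ g : G, g ∉ H → Module.finrank K
      ↥(LinearMap.eqLocus (π g).toLinearMap
        (LinearMap.id : (Fin n → K) →ₗ[K] (Fin n → K))) < n - 1 := by
    intro g hg
    by_contra hcon
    push_neg at hcon
    exact hg (hH ▸ Subgroup.subset_closure hcon)
  -- key: eqLocus of πσ and πτ is proper whenever σ ≠ τ
  have hne : ∀ σ τ : G, σ ≠ τ →
      LinearMap.eqLocus (π σ).toLinearMap (π τ).toLinearMap ≠ ⊤ := by
    intro σ τ hst h
    apply hst
    apply hinj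
    apply LinearEquiv.toLinearMap_injective
    exact LinearMap.eqLocus_eq_top.mp h
  refine ⟨?_, ?_, ?_, ?_, ?_⟩
  · -- X ∪ Y = Γ
    subst hX hY hΓ
    ext p
    simp only [Set.mem_union, Set.mem_iUnion, Set.mem_setOf_eq]
    constructor
    · rintro (⟨σ, _, h⟩ | ⟨τ, _, h⟩)
      exacts [⟨σ, h⟩, ⟨τ, h⟩]
    · rintro ⟨σ, h⟩
      by_cases hs : σ ∈ H
      · exact Or.inl ⟨σ, hs, h⟩
      · exact Or.inr ⟨σ, hs, h⟩
  · -- ¬ X ⊆ Y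
    intro hXY
    -- find v with π τ v ≠ v for all τ ∉ H
    have hcov : ¬ (⋃ τ : {τ : G // τ ∉ H},
        ((LinearMap.eqLocus (π (τ : G)).toLinearMap (π 1).toLinearMap :
          Submodule K (Fin n → K)) : Set (Fin n → K))) = Set.univ := by
      intro h
      obtain ⟨τ, hτ⟩ := Subspace.exists_eq_top_of_iUnion_eq_univ h
      exact hne _ _ (fun he => τ.2 (by rw [he]; exact H.one_mem)) hτ
    obtain ⟨v, hv⟩ := Set.ne_univ_iff_exists_notMem _ |>.mp hcov
    simp only [Set.mem_iUnion, not_exists, SetLike.mem_coe, LinearMap.mem_eqLocus,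
      Subtype.forall] at hv
    have hmem : (v, (π 1) v) ∈ X := by
      rw [hX]
      simp only [Set.mem_iUnion]
      exact ⟨1, H.one_mem, by simp [LinearMap.mem_graph_iff]⟩
    have := hXY hmem
    rw [hY] at this
    simp only [Set.mem_iUnion, Set.mem_setOf_eq, SetLike.mem_coe,
      LinearMap.mem_graph_iff] at this
    obtain ⟨τ, hτ, heq⟩ := this
    exact hv τ hτ heq.symm
  · -- ¬ Y ⊆ X
    intro hYX
    obtain ⟨τ₀, hτ₀⟩ : ∃ τ₀ : G, τ₀ ∉ H := by
      by_contra h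
      push_neg at h
      exact hHne (Subgroup.eq_top_iff' H |>.mpr h)
    have hcov : ¬ (⋃ σ : H,
        ((LinearMap.eqLocus (π (σ : G)).toLinearMap (π τ₀).toLinearMap :
          Submodule K (Fin n → K)) : Set (Fin n → K))) = Set.univ := by
      intro h
      obtain ⟨σ, hσ⟩ := Subspace.exists_eq_top_of_iUnion_eq_univ h
      exact hne _ _ (fun he => hτ₀ (by rw [← he]; exact σ.2)) hσ
    obtain ⟨v, hv⟩ := Set.ne_univ_iff_exists_notMem _ |>.mp hcov
    simp only [Set.mem_iUnion, not_exists, SetLike.mem_coe, LinearMap.mem_eqLocus,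
      Subtype.forall] at hv
    have hmem : (v, (π τ₀) v) ∈ Y := by
      rw [hY]
      simp only [Set.mem_iUnion, Set.mem_setOf_eq]
      exact ⟨τ₀, hτ₀, by simp [LinearMap.mem_graph_iff]⟩
    have := hYX hmem
    rw [hX] at this
    simp only [Set.mem_iUnion, SetLike.mem_coe, LinearMap.mem_graph_iff] at this
    obtain ⟨σ, hσ, heq⟩ := this
    exact hv σ hσ heq.symm
  · -- X ∩ Y decomposition
    subst hX hY
    ext p
    simp only [Set.mem_inter_iff, Set.mem_iUnion, Set.mem_setOf_eq, SetLike.mem_coe,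
      Submodule.mem_inf]
    tauto
  · -- dimension bound
    intro σ hσ τ hτ
    rw [finrank_graph_inf_graph]
    have hst : σ⁻¹ * τ ∉ H := fun h => hτ (by simpa using H.mul_mem hσ h)
    have hd := hrefl _ hst
    have heq : LinearMap.eqLocus (π σ).toLinearMap (π τ).toLinearMap =
        LinearMap.eqLocus (π (σ⁻¹ * τ)).toLinearMap
          (LinearMap.id : (Fin n → K) →ₗ[K] (Fin n → K)) := by
      ext v
      simp only [LinearMap.mem_eqLocus, LinearEquiv.coe_coe, LinearMap.id_coe, id_eq]
      constructor
      · intro h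
        calc (π (σ⁻¹ * τ)) v = (π σ⁻¹ * π τ) v := by rw [map_mul]
          _ = (π σ⁻¹) ((π τ) v) := rfl
          _ = (π σ⁻¹) ((π σ) v) := by rw [h]
          _ = (π σ⁻¹ * π σ) v := rfl
          _ = (π (σ⁻¹ * σ)) v := by rw [map_mul]
          _ = v := by simp
      · intro h
        calc (π σ) v = (π σ) ((π (σ⁻¹ * τ)) v) := by rw [h]
          _ = (π σ * π (σ⁻¹ * τ)) v := rfl
          _ = (π (σ * (σ⁻¹ * τ))) v := by rw [← map_mul]
          _ = (π τ) v := by rw [mul_inv_cancel_left]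
    rw [heq]
    omega
end

section
/- Let I ⊆ R^G be an ideal in the invariant ring of a finite group G acting on R = K[x_1,...,x_n] by K-algebra automorphisms, and let g ∈ R·I (the ideal of R generated by I). Then the norm Π_{σ∈G} σ(g) lies in I. -/
open MvPolynomial

/-- If every element of a nonzero multiset lies in the image of an ideal `I` of a
subalgebra `A`, then the product of the multiset is the image of an element of `I`. -/
lemma aux_multiset_prod {R : Type*} [CommRing R] {S : Type*} [CommRing S] [Algebra S R]
    {A : Subalgebra S R} (I : Ideal A) (m : Multiset R) (hm : m ≠ 0)
    (hmem : ∀ b ∈ m, b ∈ (fun x : A => (x : R)) '' I) :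
    ∃ h ∈ I, ((h : A) : R) = m.prod := by
  classical
  obtain ⟨b, hb⟩ := Multiset.exists_mem_of_ne_zero hm
  obtain ⟨a, haI, hab⟩ := hmem b hb
  have hrest : (m.erase b).prod ∈ A := A.multiset_prod_mem fun x hx => by
    obtain ⟨a', _, rfl⟩ := hmem x (Multiset.mem_of_mem_erase hx); exact a'.2
  refine ⟨(⟨(m.erase b).prod, hrest⟩ : A) * a, I.mul_mem_left _ haI, ?_⟩
  push_cast
  rw [show ((a : R)) = b from hab, mul_comm]
  conv_rhs => rw [← Multiset.cons_erase hb]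
  rw [Multiset.prod_cons]

/-- Sums of liftable elements are liftable. -/
lemma aux_sum {R : Type*} [CommRing R] {S : Type*} [CommRing S] [Algebra S R]
    {A : Subalgebra S R} (I : Ideal A) {β : Type*} (t : Finset β) (F : β → R)
    (hF : ∀ m ∈ t, ∃ h ∈ I, (h : R) = F m) :
    ∃ h ∈ I, (h : R) = ∑ m ∈ t, F m := by
  classical
  induction t using Finset.induction with
  | empty => exact ⟨0, I.zero_mem, by simp⟩
  | @insert b s hx ih =>
    obtain ⟨h1, h1I, h1e⟩ := hF b (Finset.mem_insert_self _ _)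
    obtain ⟨h2, h2I, h2e⟩ := ih fun m hm => hF m (Finset.mem_insert_of_mem hm)
    exact ⟨h1 + h2, I.add_mem h1I h2I, by push_cast [Finset.sum_insert hx, h1e, h2e]; ring⟩

/-- Let `I ⊆ R^G` be an ideal of the invariant ring of a finite
group `G` acting on `R = K[x₁,…,xₙ]` by `K`-algebra automorphisms, and let `g` lie in
the ideal `R·I` of `R` generated by `I`. Then the norm `∏_{σ∈G} σ(g)` lies in `I`. -/
theorem stmt14 {K : Type*} [Field K] {n : ℕ} {G : Type*} [Group G] [Fintype G]
    (ρ : G →* (MvPolynomial (Fin n) K ≃ₐ[K] MvPolynomial (Fin n) K))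
    (I : Ideal (invAlg ρ))
    (g : MvPolynomial (Fin n) K)
    (hg : g ∈ Ideal.span ((fun x : invAlg ρ => (x : MvPolynomial (Fin n) K)) '' I)) :
    ∃ h ∈ I, ((h : invAlg ρ) : MvPolynomial (Fin n) K) = ∏ σ : G, ρ σ g := by
  classical
  obtain ⟨c, hcsupp, hc⟩ := Submodule.mem_span_set.mp hg
  have hbimg : ∀ b ∈ c.support, b ∈ (fun x : invAlg ρ => (x : MvPolynomial (Fin n) K)) '' I := fun b hb =>
    hcsupp hb
  have hbinv : ∀ b ∈ c.support, ∀ σ : G, ρ σ b = b := by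
    intro b hb σ
    obtain ⟨a, _, rfl⟩ := hbimg b hb
    exact a.2 σ
  -- expand each σ(g)
  have hρg : ∀ σ : G, ρ σ g = ∑ b ∈ c.support, ρ σ (c b) * b := by
    intro σ
    rw [← hc, Finsupp.sum, map_sum]
    exact Finset.sum_congr rfl fun b hb => by rw [smul_eq_mul, map_mul, hbinv b hb σ]
  -- expand the product of sums
  have key : ∏ σ : G, ρ σ g = ∑ p ∈ Fintype.piFinset (fun _ : G => c.support),
      (∏ σ : G, ρ σ (c (p σ))) * ∏ σ : G, p σ := by
    simp_rw [hρg]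
    rw [Finset.prod_univ_sum]
    exact Finset.sum_congr rfl fun p _ => Finset.prod_mul_distrib
  -- group by multiset of values
  set M : (G → MvPolynomial (Fin n) K) → Multiset (MvPolynomial (Fin n) K) := fun p => Multiset.map p Finset.univ.val with hM
  set piF := Fintype.piFinset (fun _ : G => c.support) with hpiF
  have hmaps : ∀ p ∈ piF, M p ∈ piF.image M := fun p hp => Finset.mem_image_of_mem M hp
  have key2 : ∏ σ : G, ρ σ g = ∑ m ∈ piF.image M,
      (∑ p ∈ piF.filter (fun p => M p = m), ∏ σ : G, ρ σ (c (p σ))) * m.prod := by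
    rw [key, ← Finset.sum_fiberwise_of_maps_to hmaps]
    refine Finset.sum_congr rfl fun m hm => ?_
    rw [Finset.sum_mul]
    refine Finset.sum_congr rfl fun p hp => ?_
    have hpm : M p = m := (Finset.mem_filter.mp hp).2
    rw [← hpm]
    congr 1
  rw [key2]
  -- each summand lifts to I
  refine aux_sum I _ _ fun m hm => ?_
  obtain ⟨p₀, hp₀, hMp₀⟩ := Finset.mem_image.mp hm
  -- the multiset m is nonzero and has all members in the image of I
  have hmne : m ≠ 0 := by
    rw [← hMp₀, hM]
    simp only [Ne, Multiset.map_eq_zero]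
    exact fun h => (Finset.univ_nonempty (α := G)).ne_empty (Finset.val_eq_zero.mp h)
  have hmmem : ∀ b ∈ m, b ∈ (fun x : invAlg ρ => (x : MvPolynomial (Fin n) K)) '' I := by
    intro b hb
    rw [← hMp₀, hM] at hb
    obtain ⟨σ, _, rfl⟩ := Multiset.mem_map.mp hb
    exact hbimg _ (by simpa using Fintype.mem_piFinset.mp hp₀ σ)
  obtain ⟨hprod, hprodI, hprode⟩ := aux_multiset_prod I m hmne hmmem
  -- the coefficient is invariant
  set C : MvPolynomial (Fin n) K := ∑ p ∈ piF.filter (fun p => M p = m), ∏ σ : G, ρ σ (c (p σ)) with hC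
  have hCinv : ∀ τ : G, ρ τ C = C := by
    intro τ
    rw [hC, map_sum]
    refine Finset.sum_nbij' (i := fun p => fun σ => p (τ⁻¹ * σ))
      (j := fun p => fun σ => p (τ * σ)) ?_ ?_ ?_ ?_ ?_
    · intro p hp
      rw [Finset.mem_filter] at hp ⊢
      constructor
      · refine Fintype.mem_piFinset.mpr fun σ => ?_
        simpa using Fintype.mem_piFinset.mp hp.1 (τ⁻¹ * σ)
      · rw [← hp.2, hM]
        show Multiset.map (p ∘ fun σ => τ⁻¹ * σ) Finset.univ.val = _
        rw [← Multiset.map_map]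
        congr 1
        have := Finset.map_univ_equiv (Equiv.mulLeft τ⁻¹)
        calc Multiset.map (fun σ => τ⁻¹ * σ) Finset.univ.val
            = (Finset.univ.map (Equiv.mulLeft τ⁻¹).toEmbedding).val := rfl
          _ = Finset.univ.val := by rw [this]
    · intro p hp
      rw [Finset.mem_filter] at hp ⊢
      constructor
      · refine Fintype.mem_piFinset.mpr fun σ => ?_
        simpa using Fintype.mem_piFinset.mp hp.1 (τ * σ)
      · rw [← hp.2, hM]
        show Multiset.map (p ∘ fun σ => τ * σ) Finset.univ.val = _
        rw [← Multiset.map_map]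
        congr 1
        have := Finset.map_univ_equiv (Equiv.mulLeft τ)
        calc Multiset.map (fun σ => τ * σ) Finset.univ.val
            = (Finset.univ.map (Equiv.mulLeft τ).toEmbedding).val := rfl
          _ = Finset.univ.val := by rw [this]
    · intro p _; funext σ; simp
    · intro p _; funext σ; simp
    · intro p _
      rw [map_prod]
      refine Fintype.prod_equiv (Equiv.mulLeft τ) _ _ fun σ => ?_
      show ρ τ (ρ σ (c (p σ))) = ρ (τ * σ) (c (p (τ⁻¹ * (τ * σ))))
      rw [inv_mul_cancel_left, ← AlgEquiv.mul_apply, ← map_mul]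
  -- assemble
  refine ⟨(⟨C, hCinv⟩ : invAlg ρ) * hprod, I.mul_mem_left _ hprodI, ?_⟩
  push_cast
  rw [hprode]
end

section
/- Let the cyclic group C_n act on ℂ[x_1, x_2] by multiplying both variables by a primitive n-th root of unity. Then the three invariants f_1 = x_1^n, f_2 = x_1^{n−1} x_2, f_3 = x_2^n form a separating set for the action on ℂ^2: for any v, w ∈ ℂ^2, if f_i(v) = f_i(w) for i = 1,2,3, then every invariant of the action takes the same value at v and w (equivalently, v and w lie in the same orbit). -/
open MvPolynomial

/-- Let the cyclic group `Cₙ` act on `ℂ[x₁,x₂]` by multiplying both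
variables by a primitive `n`-th root of unity `ζ`. The invariants `f₁ = x₁ⁿ`,
`f₂ = x₁ⁿ⁻¹x₂`, `f₃ = x₂ⁿ` form a separating set: if they agree at `v, w ∈ ℂ²`, then
every invariant agrees at `v` and `w` and `v, w` lie in the same orbit. -/
theorem stmt15 (n : ℕ) (hn : 0 < n) (ζ : ℂ) (hζ : IsPrimitiveRoot ζ n)
    (v w : Fin 2 → ℂ)
    (h1 : (v 0) ^ n = (w 0) ^ n)
    (h2 : (v 0) ^ (n - 1) * v 1 = (w 0) ^ (n - 1) * w 1)
    (h3 : (v 1) ^ n = (w 1) ^ n) :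
    (∀ f : MvPolynomial (Fin 2) ℂ,
      (∀ k : ℕ, aeval (fun i => C (ζ ^ k) * X i) f = f) →
      eval v f = eval w f) ∧
    ∃ k : ℕ, w = fun i => ζ ^ k * v i := by
  haveI : NeZero n := ⟨hn.ne'⟩
  have key : ∃ k : ℕ, w = fun i => ζ ^ k * v i := by
    by_cases hv0 : v 0 = 0
    · have hw0 : w 0 = 0 := by
        have := h1
        rw [hv0, zero_pow hn.ne'] at this
        exact pow_eq_zero_iff hn.ne' |>.mp this.symm
      by_cases hv1 : v 1 = 0
      · have hw1 : w 1 = 0 := by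
          have := h3
          rw [hv1, zero_pow hn.ne'] at this
          exact pow_eq_zero_iff hn.ne' |>.mp this.symm
        exact ⟨0, by funext i; fin_cases i <;> simp [hw0, hw1, hv0, hv1]⟩
      · have hr : (w 1 / v 1) ^ n = 1 := by
          rw [div_pow, ← h3, div_self (pow_ne_zero _ hv1)]
        obtain ⟨k, _, hk⟩ := hζ.eq_pow_of_pow_eq_one hr
        refine ⟨k, ?_⟩
        funext i
        fin_cases i
        · simp [hw0, hv0]
        · field_simp at hk
          simpa using hk.symm
    · have hw0 : w 0 ≠ 0 := by
        intro h
        rw [h, zero_pow hn.ne'] at h1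
        exact hv0 (pow_eq_zero_iff hn.ne' |>.mp h1)
      have hr : (w 0 / v 0) ^ n = 1 := by
        rw [div_pow, ← h1, div_self (pow_ne_zero _ hv0)]
      obtain ⟨k, _, hk⟩ := hζ.eq_pow_of_pow_eq_one hr
      have hk0 : w 0 = ζ ^ k * v 0 := by
        field_simp at hk; exact hk.symm
      refine ⟨k, ?_⟩
      funext i
      fin_cases i
      · simpa using hk0
      · -- from h2: v0^{n-1} v1 = w0^{n-1} w1 = ζ^{k(n-1)} v0^{n-1} w1
        have hz : ζ ^ (k * (n-1)) * ζ ^ k = 1 := by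
          rw [← pow_add]
          have : k * (n - 1) + k = k * n := by
            rw [← Nat.mul_succ]; congr 1; omega
          rw [this, mul_comm, pow_mul, hζ.pow_eq_one, one_pow]
        have h2' : v 0 ^ (n-1) * v 1 = ζ ^ (k * (n-1)) * (v 0 ^ (n-1)) * w 1 := by
          rw [h2, hk0, mul_pow, ← pow_mul]
        have hv0n : (v 0 : ℂ) ^ (n-1) ≠ 0 := pow_ne_zero _ hv0
        have h2'' : v 1 = ζ ^ (k * (n-1)) * w 1 :=
          mul_left_cancel₀ hv0n (by linear_combination h2')
        simpa using (by
          calc w 1 = ζ ^ (k * (n-1)) * ζ ^ k * w 1 := by rw [hz, one_mul]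
          _ = ζ ^ k * (ζ ^ (k * (n-1)) * w 1) := by ring
          _ = ζ ^ k * v 1 := by rw [← h2''])
  refine ⟨?_, key⟩
  intro f hf
  obtain ⟨k, hw⟩ := key
  have h := congrArg (eval v) (hf k)
  rw [aeval_def, algebraMap_eq, ← eval_assoc] at h
  have he : (⇑(eval v) ∘ fun i => C (ζ ^ k) * X i) = fun i => ζ ^ k * v i := by
    funext i; simp
  rw [← h, hw, he]
end

section
/- Let a group G act on a finitely generated field extension L = K(a_1,...,a_n) of K by K-automorphisms, and let D := ∩_{σ∈G} (y_1 − σ(a_1), ..., y_n − σ(a_n)) ⊆ L[y_1,...,y_n] be the Derksen ideal. If G is a reduced Gröbner basis of D with respect to any monomial order, then the invariant field L^G is generated over K by the coefficients of the polynomials in G. -/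
open MvPolynomial


namespace Stmt17Aux

theorem mem_span_of_eval_eq_zero {σ R : Type*} [CommRing R] (v : σ → R)
    (p : MvPolynomial σ R) (h : eval v p = 0) :
    p ∈ Ideal.span (Set.range fun i => X i - C (v i)) := by
  have key : ∀ q : MvPolynomial σ R,
      q - C (eval v q) ∈ Ideal.span (Set.range fun i => X i - C (v i)) := by
    intro q
    induction q using MvPolynomial.induction_on with
    | C c => simp
    | add p q hp hq =>
        have := Ideal.add_mem _ hp hq
        rw [sub_add_sub_comm] at this
        simpa [C_add] using this
    | mul_X p i hp =>
        have h1 : p * X i - C (eval v (p * X i)) =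
            p * (X i - C (v i)) + (p - C (eval v p)) * C (v i) := by
          rw [eval_mul, eval_X, C_mul]; ring
        rw [h1]
        exact Ideal.add_mem _
          (Ideal.mul_mem_left _ _ (Ideal.subset_span ⟨i, rfl⟩))
          (Ideal.mul_mem_right _ _ hp)
  have := key p
  rwa [h, map_zero, sub_zero] at this

variable {L : Type*} [Field L] {n : ℕ}

/-- Leading monomial -/
noncomputable def lm (m : MonomialOrder (Fin n)) (p : MvPolynomial (Fin n) L) : Fin n →₀ ℕ :=
  m.toSyn.symm (p.support.sup ⇑m.toSyn)

theorem lm_mem {m : MonomialOrder (Fin n)} {p : MvPolynomial (Fin n) L} (hp : p ≠ 0) :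
    lm m p ∈ p.support := by
  obtain ⟨b, hb, hbs⟩ := p.support.exists_mem_eq_sup
    (MvPolynomial.support_nonempty.mpr hp) ⇑m.toSyn
  rw [lm, hbs, AddEquiv.symm_apply_apply]
  exact hb

theorem toSyn_lm {m : MonomialOrder (Fin n)} (p : MvPolynomial (Fin n) L) :
    m.toSyn (lm m p) = p.support.sup ⇑m.toSyn := by
  rw [lm, AddEquiv.apply_symm_apply]

theorem le_lm {m : MonomialOrder (Fin n)} {p : MvPolynomial (Fin n) L} {d : Fin n →₀ ℕ}
    (hd : d ∈ p.support) : m.toSyn d ≤ m.toSyn (lm m p) := by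
  rw [toSyn_lm]; exact Finset.le_sup hd

/-- The division/normal form lemma: any polynomial with coefficients in a subfield `F`
containing the coefficients of `B` can be reduced modulo `B` to a polynomial with
coefficients in `F` none of whose monomials is divisible by a leading monomial of `B`. -/
theorem division (m : MonomialOrder (Fin n)) (B : Finset (MvPolynomial (Fin n) L))
    (hmonic : ∀ g ∈ B, g.coeff (lm m g) = 1)
    (F : Subfield L) (hBF : ∀ g ∈ B, ∀ d, g.coeff d ∈ F)
    (p : MvPolynomial (Fin n) L) (hp : ∀ d, p.coeff d ∈ F) :
    ∃ r : MvPolynomial (Fin n) L, (∀ d, r.coeff d ∈ F) ∧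
      p - r ∈ Ideal.span (B : Set (MvPolynomial (Fin n) L)) ∧
      ∀ d ∈ r.support, ∀ g' ∈ B, ¬ lm m g' ≤ d := by
  classical
  set red : (Fin n →₀ ℕ) → Prop := fun d => ∃ g' ∈ B, lm m g' ≤ d with hred
  set μ : MvPolynomial (Fin n) L → WithBot m.syn :=
    fun q => (q.support.filter red).sup (fun d => ((m.toSyn d : m.syn) : WithBot m.syn)) with hμ
  suffices H : ∀ (b : WithBot m.syn) (q : MvPolynomial (Fin n) L), μ q = b →
      (∀ d, q.coeff d ∈ F) →
      ∃ r : MvPolynomial (Fin n) L, (∀ d, r.coeff d ∈ F) ∧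
        q - r ∈ Ideal.span (B : Set (MvPolynomial (Fin n) L)) ∧
        ∀ d ∈ r.support, ∀ g' ∈ B, ¬ lm m g' ≤ d by
    exact H (μ p) p rfl hp
  intro b
  induction b using WellFoundedLT.induction with
  | ind b IH =>
  intro q hqb hq
  by_cases hS : (q.support.filter red).Nonempty
  · -- reduce the top reducible monomial
    obtain ⟨d, hd, hds⟩ := (q.support.filter red).exists_mem_eq_sup hS ⇑m.toSyn
    obtain ⟨hdq, g', hg'B, hle⟩ : d ∈ q.support ∧ ∃ g' ∈ B, lm m g' ≤ d := by
      simpa [red] using hd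
    set c := q.coeff d with hc
    set e := d - lm m g' with he
    have hed : e + lm m g' = d := tsub_add_cancel_of_le hle
    set q' := q - monomial e c * g' with hq'
    -- the subtracted part is in the span
    have hmem : monomial e c * g' ∈ Ideal.span (B : Set (MvPolynomial (Fin n) L)) :=
      Ideal.mul_mem_left _ _ (Ideal.subset_span hg'B)
    -- coefficients of q' lie in F
    have hq'F : ∀ d', q'.coeff d' ∈ F := by
      intro d'
      rw [hq', coeff_sub, coeff_monomial_mul']
      split_ifs with h
      · exact F.sub_mem (hq d') (F.mul_mem (hq d) (hBF g' hg'B _))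
      · simpa using hq d'
    -- coefficient of q' at d vanishes
    have hq'd : q'.coeff d = 0 := by
      rw [hq', coeff_sub, coeff_monomial_mul', if_pos (tsub_le_self.trans_eq rfl)]
      · have : d - e = lm m g' := by
          rw [he, tsub_tsub_cancel_of_le hle]
        rw [this, hmonic g' hg'B, mul_one, hc, sub_self]
    -- every monomial of q' from the subtracted part is ≤ d in the order
    have hbound : ∀ d' ∈ q'.support, red d' → m.toSyn d' < m.toSyn d := by
      intro d' hd' hrd'
      have hne : d' ≠ d := by
        rintro rfl
        rw [MvPolynomial.mem_support_iff, hq'd] at hd'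
        exact hd' rfl
      have hle' : m.toSyn d' ≤ m.toSyn d := by
        rw [MvPolynomial.mem_support_iff, hq', coeff_sub] at hd'
        by_cases hpd' : d' ∈ q.support
        · rw [← hds]
          exact Finset.le_sup (Finset.mem_filter.mpr ⟨hpd', hrd'⟩)
        · rw [MvPolynomial.notMem_support_iff] at hpd'
          rw [hpd', zero_sub, neg_ne_zero, coeff_monomial_mul'] at hd'
          split_ifs at hd' with hed'
          · have h2 : d' - e ∈ g'.support := by
              rw [MvPolynomial.mem_support_iff]
              intro h0; rw [h0, mul_zero] at hd'; exact hd' rfl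
            have h3 : m.toSyn (d' - e) ≤ m.toSyn (lm m g') := le_lm h2
            have h4 : e + (d' - e) = d' := add_tsub_cancel_of_le hed'
            calc m.toSyn d' = m.toSyn e + m.toSyn (d' - e) := by rw [← map_add, h4]
              _ ≤ m.toSyn e + m.toSyn (lm m g') := by exact add_le_add_right h3 _
              _ = m.toSyn d := by rw [← map_add, hed]
          · exact absurd rfl hd'
      exact lt_of_le_of_ne hle' (fun hEq => hne (m.toSyn.injective hEq))
    -- the measure strictly decreases
    have hμlt : μ q' < b := by
      have hb : b = ((m.toSyn d : m.syn) : WithBot m.syn) := by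
        rw [← hqb, hμ]
        apply le_antisymm
        · apply Finset.sup_le
          intro d' hd'
          exact_mod_cast hds ▸ Finset.le_sup hd'
        · exact Finset.le_sup (f := fun d => ((m.toSyn d : m.syn) : WithBot m.syn)) hd
      rw [hb, hμ]
      apply Finset.sup_lt_iff (by simp : (⊥ : WithBot m.syn) < _) |>.mpr
      intro d' hd'
      obtain ⟨h1, h2⟩ := Finset.mem_filter.mp hd'
      exact_mod_cast hbound d' h1 h2
    obtain ⟨r, hrF, hrD, hrred⟩ := IH (μ q') hμlt q' rfl hq'F
    refine ⟨r, hrF, ?_, hrred⟩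
    have : q - r = (monomial e c * g') + (q' - r) := by rw [hq']; ring
    rw [this]
    exact Ideal.add_mem _ hmem hrD
  · -- q is already reduced
    refine ⟨q, hq, by simp, ?_⟩
    intro d hd g' hg'B hle
    exact hS ⟨d, Finset.mem_filter.mpr ⟨hd, g', hg'B, hle⟩⟩

end Stmt17Aux

/-- Let a group `G` act on a finitely generated field extension
`L = K(a₁,…,aₙ)` by `K`-automorphisms, and let
`D = ∩_{σ∈G} (y₁ − σ(a₁), …, yₙ − σ(aₙ)) ⊆ L[y₁,…,yₙ]` be the Derksen ideal. If `B`
is a reduced Gröbner basis of `D` with respect to a monomial order `m`, then the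
invariant field `L^G` is generated over `K` by the coefficients of the elements
of `B`. -/
theorem stmt17 {K L : Type*} [Field K] [Field L] [Algebra K L]
    {n : ℕ} (a : Fin n → L)
    (hgen : IntermediateField.adjoin K (Set.range a) = ⊤)
    {G : Type*} [Group G] (ρ : G →* (L ≃ₐ[K] L))
    (D : Ideal (MvPolynomial (Fin n) L))
    (hD : D = ⨅ σ : G, Ideal.span (Set.range fun i => X i - C (ρ σ (a i))))
    (m : MonomialOrder (Fin n))
    (B : Finset (MvPolynomial (Fin n) L))
    (hB0 : (0 : MvPolynomial (Fin n) L) ∉ B)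
    (hBspan : Ideal.span (B : Set (MvPolynomial (Fin n) L)) = D)
    -- `B` is a Gröbner basis: the leading monomial of every nonzero element of `D`
    -- is divisible by the leading monomial of some element of `B`
    (hGB : ∀ f ∈ D, f ≠ 0 → ∃ g ∈ B,
      m.toSyn.symm (g.support.sup ⇑m.toSyn) ≤ m.toSyn.symm (f.support.sup ⇑m.toSyn))
    -- `B` is reduced: each element is monic and none of its monomials is divisible
    -- by the leading monomial of another element of `B`
    (hmonic : ∀ g ∈ B, g.coeff (m.toSyn.symm (g.support.sup ⇑m.toSyn)) = 1)
    (hred : ∀ g ∈ B, ∀ g' ∈ B, g ≠ g' → ∀ d ∈ g.support,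
      ¬ m.toSyn.symm (g'.support.sup ⇑m.toSyn) ≤ d) :
    ∀ x : L, x ∈ IntermediateField.adjoin K
        {c : L | ∃ g ∈ B, ∃ d : Fin n →₀ ℕ, g.coeff d = c} ↔
      ∀ σ, ρ σ x = x := by
  
  classical
  have hlm : ∀ p : MvPolynomial (Fin n) L,
      Stmt17Aux.lm m p = m.toSyn.symm (p.support.sup ⇑m.toSyn) := fun _ => rfl
  -- the ideal D is stable under the coefficientwise action of G
  have hDmap : ∀ σ : G, ∀ f ∈ D,
      MvPolynomial.map ((ρ σ).toAlgHom.toRingHom) f ∈ D := by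
    intro σ f hf
    rw [hD, Ideal.mem_iInf] at hf ⊢
    intro τ
    have h1 := hf (σ⁻¹ * τ)
    have h2 := Ideal.mem_map_of_mem (MvPolynomial.map ((ρ σ).toAlgHom.toRingHom)) h1
    rw [Ideal.map_span] at h2
    refine Ideal.span_mono ?_ h2
    rintro _ ⟨_, ⟨i, rfl⟩, rfl⟩
    refine ⟨i, ?_⟩
    rw [map_sub, MvPolynomial.map_X, MvPolynomial.map_C]
    have : (ρ σ) ((ρ (σ⁻¹ * τ)) (a i)) = (ρ τ) (a i) := by
      rw [← AlgEquiv.mul_apply, ← map_mul, mul_inv_cancel_left]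
    simp only [AlgHom.toRingHom_eq_coe, RingHom.coe_coe, AlgEquiv.toAlgHom_eq_coe,
      AlgHom.coe_coe] at this ⊢
    exact congrArg (fun y => X i - C y) this.symm
  -- every element of B is fixed by the coefficientwise action
  have hBinv : ∀ (σ : G), ∀ g ∈ B, MvPolynomial.map ((ρ σ).toAlgHom.toRingHom) g = g := by
    intro σ g hgB
    set φ := (ρ σ).toAlgHom.toRingHom with hφ
    set h := g - MvPolynomial.map φ g with hh
    by_contra hne
    have hh0 : h ≠ 0 := sub_ne_zero.mpr (Ne.symm hne)
    have hgD : g ∈ D := hBspan ▸ Ideal.subset_span hgB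
    have hhD : h ∈ D := D.sub_mem hgD (hDmap σ g hgD)
    obtain ⟨g', hg'B, hg'le⟩ := hGB h hhD hh0
    rw [← hlm, ← hlm] at hg'le
    have hlmh : Stmt17Aux.lm m h ∈ h.support := Stmt17Aux.lm_mem hh0
    have hsub : ∀ d ∈ h.support, d ∈ g.support := by
      intro d hd
      rw [MvPolynomial.mem_support_iff] at hd ⊢
      intro h0
      apply hd
      rw [hh, coeff_sub, coeff_map, h0, map_zero, sub_zero]
    by_cases hgg' : g = g'
    · subst hgg'
      have h1 : m.toSyn (Stmt17Aux.lm m h) ≤ m.toSyn (Stmt17Aux.lm m g) :=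
        Stmt17Aux.le_lm (hsub _ hlmh)
      have h2 : m.toSyn (Stmt17Aux.lm m g) ≤ m.toSyn (Stmt17Aux.lm m h) :=
        m.toSyn_monotone hg'le
      have h3 : Stmt17Aux.lm m h = Stmt17Aux.lm m g :=
        m.toSyn.injective (le_antisymm h1 h2)
      rw [MvPolynomial.mem_support_iff, h3] at hlmh
      apply hlmh
      rw [hh, coeff_sub, coeff_map]
      have hm1 : g.coeff (Stmt17Aux.lm m g) = 1 := hmonic g hgB
      rw [hm1, map_one, sub_self]
    · exact hred g hgB g' hg'B hgg' _ (hsub _ hlmh) hg'le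
  -- the invariant field
  set Finv : IntermediateField K L :=
    { carrier := {x : L | ∀ σ, ρ σ x = x}
      mul_mem' := fun hx hy σ => by rw [map_mul, hx σ, hy σ]
      one_mem' := fun σ => map_one _
      add_mem' := fun hx hy σ => by rw [map_add, hx σ, hy σ]
      zero_mem' := fun σ => map_zero _
      algebraMap_mem' := fun k σ => (ρ σ).commutes k
      inv_mem' := fun x hx σ => by rw [map_inv₀, hx σ] } with hFinv
  intro x
  constructor
  · -- coefficients of B are invariant
    intro hx
    have hSsub : {c : L | ∃ g ∈ B, ∃ d : Fin n →₀ ℕ, g.coeff d = c} ⊆ (Finv : Set L) := by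
      rintro c ⟨g, hgB, d, rfl⟩ σ
      conv_rhs => rw [← hBinv σ g hgB]
      rw [coeff_map]
      rfl
    exact IntermediateField.adjoin_le_iff.mpr hSsub hx
  · intro hx
    by_cases hx0 : x = 0
    · subst hx0; exact zero_mem _
    obtain ⟨r0, s0, hxr⟩ :=
      (IntermediateField.mem_adjoin_range_iff K a x).mp (by rw [hgen]; exact trivial)
    have hs0 : aeval a s0 ≠ 0 := by
      intro h0
      exact hx0 (by rw [hxr, h0, div_zero])
    have hxs : x * aeval a s0 = aeval a r0 := by
      rw [hxr, div_mul_cancel₀ _ hs0]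
    set F := IntermediateField.adjoin K
      {c : L | ∃ g ∈ B, ∃ d : Fin n →₀ ℕ, g.coeff d = c} with hF
    have hBF : ∀ g' ∈ B, ∀ d, g'.coeff d ∈ F.toSubfield := fun g' hg' d =>
      IntermediateField.subset_adjoin _ _ ⟨g', hg', d, rfl⟩
    set f := MvPolynomial.map (algebraMap K L) r0 with hfdef
    set g := MvPolynomial.map (algebraMap K L) s0 with hgdef
    have hfF : ∀ d, f.coeff d ∈ F.toSubfield := fun d => by
      rw [hfdef, coeff_map]; exact F.algebraMap_mem _
    have hgF : ∀ d, g.coeff d ∈ F.toSubfield := fun d => by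
      rw [hgdef, coeff_map]; exact F.algebraMap_mem _
    have hmonic' : ∀ g ∈ B, g.coeff (Stmt17Aux.lm m g) = 1 := hmonic
    obtain ⟨rf, hrfF, hrfD, hrfred⟩ :=
      Stmt17Aux.division m B hmonic' F.toSubfield hBF f hfF
    obtain ⟨rg, hrgF, hrgD, hrgred⟩ :=
      Stmt17Aux.division m B hmonic' F.toSubfield hBF g hgF
    rw [hBspan] at hrfD hrgD
    -- evaluation of mapped polynomials
    have hev : ∀ (σ : G) (p0 : MvPolynomial (Fin n) K),
        eval (fun i => ρ σ (a i)) (MvPolynomial.map (algebraMap K L) p0)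
          = ρ σ (aeval a p0) := by
      intro σ p0
      rw [eval_map, ← aeval_def]
      exact (comp_aeval_apply (f := a) (ρ σ).toAlgHom p0).symm
    have hhD : f - C x * g ∈ D := by
      rw [hD, Ideal.mem_iInf]
      intro σ
      apply Stmt17Aux.mem_span_of_eval_eq_zero
      rw [map_sub, map_mul, eval_C, hev σ r0, hev σ s0, ← hxs, map_mul, hx σ, sub_self]
    have hrD : rf - C x * rg ∈ D := by
      have heq : rf - C x * rg = (f - C x * g) - (f - rf) + C x * (g - rg) := by ring
      rw [heq]
      exact D.add_mem (D.sub_mem hhD hrfD) (Ideal.mul_mem_left _ _ hrgD)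
    have hr0 : rf = C x * rg := by
      rw [← sub_eq_zero]
      by_contra hne
      obtain ⟨g', hg'B, hg'le⟩ := hGB _ hrD hne
      rw [← hlm, ← hlm] at hg'le
      have hlmm := Stmt17Aux.lm_mem (m := m) hne
      rw [MvPolynomial.mem_support_iff, coeff_sub] at hlmm
      by_cases hc : rf.coeff (Stmt17Aux.lm m (rf - C x * rg)) ≠ 0
      · exact hrfred _ (MvPolynomial.mem_support_iff.mpr hc) g' hg'B hg'le
      · push_neg at hc
        rw [hc, zero_sub, neg_ne_zero, coeff_C_mul] at hlmm
        have : rg.coeff (Stmt17Aux.lm m (rf - C x * rg)) ≠ 0 := fun h0 => by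
          rw [h0, mul_zero] at hlmm; exact hlmm rfl
        exact hrgred _ (MvPolynomial.mem_support_iff.mpr this) g' hg'B hg'le
    have hrg0 : rg ≠ 0 := by
      rintro rfl
      have hgD : g ∈ D := by simpa using hrgD
      have hgev : eval a g = 0 := by
        have h1 : D ≤ Ideal.span (Set.range fun i => X i - C (a i)) := by
          rw [hD]
          refine le_trans (iInf_le _ (1 : G)) ?_
          simp
        have h2 : Ideal.span (Set.range fun i => X i - C (a i)) ≤
            RingHom.ker (eval a) := by
          rw [Ideal.span_le]
          rintro _ ⟨i, rfl⟩
          simp [RingHom.mem_ker]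
        exact h2 (h1 hgD)
      apply hs0
      rw [aeval_def, ← eval_map, ← hgdef, hgev]
    set d := Stmt17Aux.lm m rg with hddef
    have hd : rg.coeff d ≠ 0 := MvPolynomial.mem_support_iff.mp (Stmt17Aux.lm_mem hrg0)
    have hco : rf.coeff d = x * rg.coeff d := by rw [hr0, coeff_C_mul]
    have hxe : x = rf.coeff d * (rg.coeff d)⁻¹ := by
      rw [hco, mul_assoc, mul_inv_cancel₀ hd, mul_one]
    rw [hxe]
    exact F.mul_mem (hrfF d) (F.inv_mem (hrgF d))
end

section
/- Let G be a group acting on R = K[x_1,...,x_n] by K-algebra automorphisms. Then there exists a finite subset S ⊆ R^G that is separating: for all v, w ∈ K^n, if some invariant f ∈ R^G satisfies f(v) ≠ f(w), then some g ∈ S satisfies g(v) ≠ g(w). -/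
open MvPolynomial

/-- For any group `G` acting on `R = K[x₁,…,xₙ]` by `K`-algebra
automorphisms, there exists a finite separating set of invariants: a finite
`S ⊆ R^G` such that whenever some invariant distinguishes two points `v, w ∈ Kⁿ`,
some element of `S` does. -/
theorem stmt19 {K : Type*} [Field K] {n : ℕ} {G : Type*} [Group G]
    (ρ : G →* (MvPolynomial (Fin n) K ≃ₐ[K] MvPolynomial (Fin n) K)) :
    ∃ S : Finset (MvPolynomial (Fin n) K),
      (∀ g ∈ S, ∀ σ, ρ σ g = g) ∧
      ∀ v w : Fin n → K,
        (∃ f : MvPolynomial (Fin n) K, (∀ σ, ρ σ f = f) ∧ eval v f ≠ eval w f) →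
        ∃ g ∈ S, eval v g ≠ eval w g := by
  classical
  -- the "difference" map Δ into K[x,y]
  set Δ : MvPolynomial (Fin n) K → MvPolynomial (Fin n ⊕ Fin n) K :=
    fun f => rename Sum.inl f - rename Sum.inr f with hΔ
  set D : Set (MvPolynomial (Fin n ⊕ Fin n) K) :=
    Δ '' {f | ∀ σ, ρ σ f = f} with hD
  -- the ideal generated by D is finitely generated
  have hfg : (Ideal.span D).FG := IsNoetherian.noetherian _
  obtain ⟨T, hT⟩ := hfg
  -- each generator lies in the span of a finite subset of D
  have hmem : ∀ t ∈ T, ∃ U : Finset (MvPolynomial (Fin n ⊕ Fin n) K),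
      ↑U ⊆ D ∧ t ∈ Ideal.span (U : Set (MvPolynomial (Fin n ⊕ Fin n) K)) := by
    intro t ht
    have : t ∈ Ideal.span D := by
      rw [← hT]; exact Ideal.subset_span ht
    exact Submodule.mem_span_finite_of_mem_span this
  choose Uf hUfD hUfmem using hmem
  set U : Finset (MvPolynomial (Fin n ⊕ Fin n) K) :=
    T.attach.biUnion (fun t => Uf t t.2) with hU
  have hUD : (U : Set (MvPolynomial (Fin n ⊕ Fin n) K)) ⊆ D := by
    intro u hu
    simp only [hU, Finset.coe_biUnion, Set.mem_iUnion] at hu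
    obtain ⟨t, ht, hut⟩ := hu
    exact hUfD t t.2 hut
  have hspan : Ideal.span D ≤ Ideal.span (U : Set (MvPolynomial (Fin n ⊕ Fin n) K)) := by
    rw [← hT, Ideal.span_le]
    intro t ht
    refine Ideal.span_mono ?_ (hUfmem t ht)
    intro u hu
    simp only [hU, Finset.coe_biUnion, Set.mem_iUnion]
    exact ⟨⟨t, ht⟩, Finset.mem_attach _ _, hu⟩
  -- for each u ∈ U choose an invariant f with Δ f = u
  have hchoice : ∀ u ∈ U, ∃ f, (∀ σ, ρ σ f = f) ∧ Δ f = u := fun u hu => hUD hu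
  choose F hFinv hFΔ using hchoice
  refine ⟨U.attach.image (fun u => F u.1 u.2), ?_, ?_⟩
  · intro g hg σ
    simp only [Finset.mem_image, Finset.mem_attach, true_and] at hg
    obtain ⟨u, hu⟩ := hg
    exact hu ▸ hFinv u u.2 σ
  · rintro v w ⟨f, hfinv, hfvw⟩
    by_contra hcon
    push_neg at hcon
    -- evaluation at the pair point (v, w)
    set e : MvPolynomial (Fin n ⊕ Fin n) K →+* K := eval (Sum.elim v w) with he
    have heΔ : ∀ p : MvPolynomial (Fin n) K, e (Δ p) = eval v p - eval w p := by
      intro p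
      simp [he, hΔ, eval_rename]
    have hker : Ideal.span D ≤ RingHom.ker e := by
      refine le_trans hspan ?_
      rw [Ideal.span_le]
      intro u hu
      have hg : F u hu ∈ U.attach.image (fun u => F u.1 u.2) := by
        simp only [Finset.mem_image, Finset.mem_attach, true_and]
        exact ⟨⟨u, hu⟩, rfl⟩
      have := hcon _ hg
      have : e u = 0 := by
        rw [← hFΔ u hu, heΔ, this, sub_self]
      exact this
    have hΔf : Δ f ∈ Ideal.span D := Ideal.subset_span ⟨f, hfinv, rfl⟩
    have : e (Δ f) = 0 := hker hΔf
    rw [heΔ, sub_eq_zero] at this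
    exact hfvw this
end
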